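/- Let θ⁰, θ¹, θᵗ, θ₁^∞, θ₂^∞, θ₃^∞ ∈ ℂ with 2(θ⁰+θ¹+θᵗ+θ₁^∞)+θ₂^∞+θ₃^∞ = 0, set θ = θ⁰+θ¹+θᵗ and Θ = diag(θ₂^∞,θ₃^∞). Let I ⊆ ℝ be an open interval with 0,1 ∉ I, and let q₁,q₂,p₁,p₂,u : I → ℂ be differentiable with u(t) ≠ 0 for all t. Define Q(t) = [[q₁, u],[−q₂/u, q₁]] and P(t) = [[p₁/2, −p₂u],[(p₂q₂−θ−θ₁^∞−θ₂^∞)/u, p₁/2]]. Suppose the matrix differential equations t(t−1)Q′ = (Q−t)PQ(Q−1) + Q(Q−1)P(Q−t) + (θ⁰+1)Q(Q−1) + (θ+2θ₁^∞−1)Q(Q−t) + θᵗ(Q−1)(Q−t) and t(t−1)P′ = −(Q−1)P(Q−t)P − P(Q−t)PQ − PQ(Q−1)P − [(θ⁰+1){P(Q−1)+QP} + (θ+2θ₁^∞−1){P(Q−t)+QP} + θᵗ{P(Q−t)+(Q−1)P}] − (θ+θ₁^∞)(θ⁰+θᵗ+θ₁^∞) hold on I. Then (q₁,p₁,q₂,p₂)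 satisfies the Hamiltonian system dqᵢ/dt = ∂H/∂pᵢ, dpᵢ/dt = −∂H/∂qᵢ (i = 1,2), where H = H(t;q₁,p₁,q₂,p₂) is determined by t(t−1)H = tr[Q(Q−1)(Q−t)P² + {((θ⁰+1)I₂ − (θ+θ₁^∞)I₂ − Θ)Q(Q−1) + θᵗ(Q−1)(Q−t) + (θ+2θ₁^∞−1)Q(Q−t)}P + (θ+θ₁^∞)(θ⁰+θᵗ+θ₁^∞)Q]; in particular this trace is independent of u and is a polynomial function of (q₁,p₁,q₂,p₂). -/

import Mathlib

/-!
The non-abelian sixth matrix Painlevé system implies the Hamiltonian system for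
`H^Mat_VI`, and the defining trace is independent of `u` and polynomial in the
canonical coordinates `(q₁,p₁,q₂,p₂)`.
-/

open Matrix

/-- `Q = [[q₁, u],[−q₂/u, q₁]]` with `a = q₁`, `c = q₂`, `v = u`. -/
noncomputable def Qm (a c v : ℂ) : Matrix (Fin 2) (Fin 2) ℂ := !![a, v; -c/v, a]

/-- `P = [[p₁/2, −p₂u],[(p₂q₂−θ)/u, p₁/2]]` with `b = p₁`, `d = p₂`, `c = q₂`, `v = u`. -/
noncomputable def Pm (b d c θ v : ℂ) : Matrix (Fin 2) (Fin 2) ℂ :=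
  !![b/2, -d*v; (d*c - θ)/v, b/2]

/-- The trace `tr[Q(Q−1)(Q−t)P² + {((θ⁰+1) − (θ+θ₁^∞) − Θ)Q(Q−1) + θᵗ(Q−1)(Q−t)
    + (θ+2θ₁^∞−1)Q(Q−t)}P + (θ+θ₁^∞)(θ⁰+θᵗ+θ₁^∞)Q]`, where `θ = θ⁰+θ¹+θᵗ`,
    `Θ = diag(θ₂^∞, θ₃^∞)`, with `Q, P` parametrized by `(a,b,c,d,v) = (q₁,p₁,q₂,p₂,u)`. -/
noncomputable def trVI (θ0 θ1 θt θi1 θi2 θi3 t a b c d v : ℂ) : ℂ :=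
  let θ : ℂ := θ0 + θ1 + θt
  let Θ : Matrix (Fin 2) (Fin 2) ℂ := Matrix.diagonal ![θi2, θi3]
  let Q : Matrix (Fin 2) (Fin 2) ℂ := Qm a c v
  let P : Matrix (Fin 2) (Fin 2) ℂ := Pm b d c (θ + θi1 + θi2) v
  (Q * (Q - 1) * (Q - t • (1 : Matrix (Fin 2) (Fin 2) ℂ)) * P * P
    + (((θ0 + 1 - θ - θi1) • (1 : Matrix (Fin 2) (Fin 2) ℂ) - Θ) * (Q * (Q - 1))
        + θt • ((Q - 1) * (Q - t • (1 : Matrix (Fin 2) (Fin 2) ℂ)))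
        + (θ + 2 * θi1 - 1) • (Q * (Q - t • (1 : Matrix (Fin 2) (Fin 2) ℂ)))) * P
    + ((θ + θi1) * (θ0 + θt + θi1)) • Q).trace

/-- The Hamiltonian `H^Mat_VI(t; q₁,p₁,q₂,p₂)`, determined by `t(t−1)H = trVI` (`u = 1`). -/
noncomputable def HVI (θ0 θ1 θt θi1 θi2 θi3 t a b c d : ℂ) : ℂ :=
  (t * (t - 1))⁻¹ * trVI θ0 θ1 θt θi1 θi2 θi3 t a b c d 1



lemma diag_two (x y : ℂ) : (Matrix.diagonal ![x, y] : Matrix (Fin 2) (Fin 2) ℂ) = !![x, 0; 0, y] := by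
  ext i j
  fin_cases i <;> fin_cases j <;> simp [Matrix.diagonal]

set_option maxHeartbeats 4000000 in
/-- Closed form of the trace (independent of `v`). -/
lemma trVI_eq (θ0 θ1 θt θi1 θi2 θi3 t a b c d v : ℂ) (hv : v ≠ 0) :
    trVI θ0 θ1 θt θi1 θi2 θi3 t a b c d v
      = (1)*θi2 + (-1)*θi2^2 + (1)*θi1 + (-2)*θi1*θi2 + (-1)*θi1^2 + (1)*θt + (-1)*θt*θi2 + (-1)*θt*θi1 + (1)*θ1 + (-2)*θ1*θi2 + (-2)*θ1*θi1 + (-1)*θ1*θt + (-1)*θ1^2 + (1)*θ0 + (-1)*θ0*θi2 + (-1)*θ0*θi1 + (-1)*θ0*θ1 + (-2)*c*d + (1)*c*d*θi3 + (3)*c*d*θi2 + (4)*c*d*θi1 + (2)*c*d*θt + (4)*c*d*θ1 + (2)*c*d*θ0 + (-2)*c^2*d^2 + ((1)/2)*b*c*θi3 + ((3)/2)*b*c*θi2 + (1)*b*c*θ1 + (-2)*b*c^2*d + ((1)/2)*b^2*c + (2)*a*θi2^2 + (2)*a*θ1*θi2 + (-2)*a*c*d*θi3 + (-8)*a*c*d*θi2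 + (-2)*a*c*d*θi1 + (-2)*a*c*d*θt + (-6)*a*c*d*θ1 + (-2)*a*c*d*θ0 + (6)*a*c^2*d^2 + (-1)*a*b + ((1)/2)*a*b*θi3 + ((5)/2)*a*b*θi2 + (3)*a*b*θi1 + (2)*a*b*θt + (3)*a*b*θ1 + (2)*a*b*θ0 + (-4)*a*b*c*d + ((-3)/2)*a*b^2*c + (-2)*a^2*d*θi2 + (-2)*a^2*d*θi1 + (-2)*a^2*d*θt + (-2)*a^2*d*θ1 + (-2)*a^2*d*θ0 + (2)*a^2*c*d^2 + ((-1)/2)*a^2*b*θi3 + ((-7)/2)*a^2*b*θi2 + (-2)*a^2*b*θi1 + (-2)*a^2*b*θt + (-3)*a^2*b*θ1 + (-2)*a^2*b*θ0 + (6)*a^2*b*c*d + ((-1)/2)*a^2*b^2 + (2)*a^3*d*θi2 + (2)*a^3*d*θi1 + (2)*a^3*d*θt + (2)*a^3*d*θ1 + (2)*a^3*d*θ0 + (-2)*a^3*c*d^2 + ((1)/2)*a^3*b^2 + (-1)*t*θi2 + (-1)*t*θi1 + (2)*t*θi1*θi2 + (2)*t*θi1^2 + (-1)*t*θt + (2)*t*θt*θi2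 + (4)*t*θt*θi1 + (2)*t*θt^2 + (-1)*t*θ1 + (1)*t*θ1*θi2 + (3)*t*θ1*θi1 + (3)*t*θ1*θt + (1)*t*θ1^2 + (-1)*t*θ0 + (1)*t*θ0*θi2 + (3)*t*θ0*θi1 + (3)*t*θ0*θt + (2)*t*θ0*θ1 + (1)*t*θ0^2 + (2)*t*c*d + (2)*t*c*d*θi2 + (-2)*t*c*d*θi1 + (-2)*t*c*d*θt + (-2)*t*c^2*d^2 + (-1)*t*b*θi2 + (-1)*t*b*θi1 + (-1)*t*b*θ1 + (-1)*t*b*θ0 + (2)*t*b*c*d + ((1)/2)*t*b^2*c + (2)*t*a*d*θi2 + (2)*t*a*d*θi1 + (2)*t*a*d*θt + (2)*t*a*d*θ1 + (2)*t*a*d*θ0 + (-2)*t*a*c*d^2 + (1)*t*a*b + (2)*t*a*b*θi2 + (1)*t*a*b*θ1 + (1)*t*a*b*θ0 + (-4)*t*a*b*c*d + ((1)/2)*t*a*b^2 + (-2)*t*a^2*d*θi2 + (-2)*t*a^2*d*θi1 + (-2)*t*a^2*d*θt + (-2)*t*a^2*d*θ1 + (-2)*t*a^2*d*θ0 + (2)*t*a^2*c*d^2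 + ((-1)/2)*t*a^2*b^2 := by
  have hvw : v * v⁻¹ = 1 := mul_inv_cancel₀ hv
  simp only [trVI, Qm, Pm, Matrix.trace_fin_two, Matrix.mul_apply, Fin.sum_univ_two, Matrix.sub_apply,
    Matrix.add_apply, Matrix.smul_apply, Matrix.neg_apply, Matrix.one_fin_two, diag_two,
    Matrix.cons_val', Matrix.cons_val_zero, Matrix.cons_val_one, Matrix.head_cons, Matrix.head_fin_const,
    Matrix.empty_val', Matrix.cons_val_fin_one, Matrix.of_apply, smul_eq_mul, Fin.zero_eta, Fin.mk_one]
  linear_combination ((1)*θi2 + (-1)*θi2^2 + (1)*θi1 + (-2)*θi1*θi2 + (-1)*θi1^2 + (1)*θt + (-1)*θt*θi2 + (-1)*θt*θi1 + (1)*θ1 + (-2)*θ1*θi2 + (-2)*θ1*θi1 + (-1)*θ1*θt + (-1)*θ1^2 + (1)*θ0 + (-1)*θ0*θi2 + (-1)*θ0*θi1 + (-1)*θ0*θ1 + (-2)*c*d + (1)*c*d*θi3 + (3)*c*d*θi2 + (4)*c*d*θi1 + (2)*c*d*θt + (4)*c*d*θ1 + (2)*c*d*θ0 + (2)*c*d*v*v⁻¹*θi2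 + (2)*c*d*v*v⁻¹*θi1 + (2)*c*d*v*v⁻¹*θt + (2)*c*d*v*v⁻¹*θ1 + (2)*c*d*v*v⁻¹*θ0 + (-2)*c^2*d^2 + (-2)*c^2*d^2*v*v⁻¹ + ((1)/2)*b*c*θi3 + ((3)/2)*b*c*θi2 + (1)*b*c*θ1 + (1)*b*c*v*v⁻¹*θi2 + (1)*b*c*v*v⁻¹*θi1 + (1)*b*c*v*v⁻¹*θt + (1)*b*c*v*v⁻¹*θ1 + (1)*b*c*v*v⁻¹*θ0 + (-2)*b*c^2*d + (-2)*b*c^2*d*v*v⁻¹ + ((1)/2)*b^2*c + (2)*a*θi2^2 + (-2)*a*θi1^2 + (-4)*a*θt*θi1 + (-2)*a*θt^2 + (2)*a*θ1*θi2 + (-2)*a*θ1*θi1 + (-2)*a*θ1*θt + (-4)*a*θ0*θi1 + (-4)*a*θ0*θt + (-2)*a*θ0*θ1 + (-2)*a*θ0^2 + (-2)*a*c*d*θi3 + (-8)*a*c*d*θi2 + (-2)*a*c*d*θi1 + (-2)*a*c*d*θt + (-6)*a*c*d*θ1 + (-2)*a*c*d*θ0 + (-6)*a*c*d*v*v⁻¹*θi2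 + (-6)*a*c*d*v*v⁻¹*θi1 + (-6)*a*c*d*v*v⁻¹*θt + (-6)*a*c*d*v*v⁻¹*θ1 + (-6)*a*c*d*v*v⁻¹*θ0 + (6)*a*c^2*d^2 + (6)*a*c^2*d^2*v*v⁻¹ + (2)*a*b*θi2 + (2)*a*b*θi1 + (2)*a*b*θt + (2)*a*b*θ1 + (2)*a*b*θ0 + (-4)*a*b*c*d + ((-3)/2)*a*b^2*c + (-2)*a^2*d*θi2 + (-2)*a^2*d*θi1 + (-2)*a^2*d*θt + (-2)*a^2*d*θ1 + (-2)*a^2*d*θ0 + (2)*a^2*c*d^2 + (-3)*a^2*b*θi2 + (-3)*a^2*b*θi1 + (-3)*a^2*b*θt + (-3)*a^2*b*θ1 + (-3)*a^2*b*θ0 + (6)*a^2*b*c*d + (2)*a^3*d*θi2 + (2)*a^3*d*θi1 + (2)*a^3*d*θt + (2)*a^3*d*θ1 + (2)*a^3*d*θ0 + (-2)*a^3*c*d^2 + (-1)*t*θi2 + (-1)*t*θi1 + (2)*t*θi1*θi2 + (2)*t*θi1^2 + (-1)*t*θt + (2)*t*θt*θi2 + (4)*t*θt*θi1 + (2)*t*θt^2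 + (-1)*t*θ1 + (1)*t*θ1*θi2 + (3)*t*θ1*θi1 + (3)*t*θ1*θt + (1)*t*θ1^2 + (-1)*t*θ0 + (1)*t*θ0*θi2 + (3)*t*θ0*θi1 + (3)*t*θ0*θt + (2)*t*θ0*θ1 + (1)*t*θ0^2 + (2)*t*c*d + (2)*t*c*d*θi2 + (-2)*t*c*d*θi1 + (-2)*t*c*d*θt + (2)*t*c*d*v*v⁻¹*θi2 + (2)*t*c*d*v*v⁻¹*θi1 + (2)*t*c*d*v*v⁻¹*θt + (2)*t*c*d*v*v⁻¹*θ1 + (2)*t*c*d*v*v⁻¹*θ0 + (-2)*t*c^2*d^2 + (-2)*t*c^2*d^2*v*v⁻¹ + (-1)*t*b*θi2 + (-1)*t*b*θi1 + (-1)*t*b*θt + (-1)*t*b*θ1 + (-1)*t*b*θ0 + (2)*t*b*c*d + ((1)/2)*t*b^2*c + (2)*t*a*d*θi2 + (2)*t*a*d*θi1 + (2)*t*a*d*θt + (2)*t*a*d*θ1 + (2)*t*a*d*θ0 + (-2)*t*a*c*d^2 + (2)*t*a*b*θi2 + (2)*t*a*b*θi1 + (2)*t*a*b*θt + (2)*t*a*b*θ1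 + (2)*t*a*b*θ0 + (-4)*t*a*b*c*d + (-2)*t*a^2*d*θi2 + (-2)*t*a^2*d*θi1 + (-2)*t*a^2*d*θt + (-2)*t*a^2*d*θ1 + (-2)*t*a^2*d*θ0 + (2)*t*a^2*c*d^2) * hvw

lemma HVI_eq (θ0 θ1 θt θi1 θi2 θi3 t a b c d : ℂ) :
    HVI θ0 θ1 θt θi1 θi2 θi3 t a b c d
      = (t*(t-1))⁻¹ * ((1)*θi2 + (-1)*θi2^2 + (1)*θi1 + (-2)*θi1*θi2 + (-1)*θi1^2 + (1)*θt + (-1)*θt*θi2 + (-1)*θt*θi1 + (1)*θ1 + (-2)*θ1*θi2 + (-2)*θ1*θi1 + (-1)*θ1*θt + (-1)*θ1^2 + (1)*θ0 + (-1)*θ0*θi2 + (-1)*θ0*θi1 + (-1)*θ0*θ1 + (-2)*c*d + (1)*c*d*θi3 + (3)*c*d*θi2 + (4)*c*d*θi1 + (2)*c*d*θt + (4)*c*d*θ1 + (2)*c*d*θ0 + (-2)*c^2*d^2 + ((1)/2)*b*c*θi3 + ((3)/2)*b*c*θi2 + (1)*b*c*θ1 + (-2)*b*c^2*d + ((1)/2)*b^2*c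 + (2)*a*θi2^2 + (2)*a*θ1*θi2 + (-2)*a*c*d*θi3 + (-8)*a*c*d*θi2 + (-2)*a*c*d*θi1 + (-2)*a*c*d*θt + (-6)*a*c*d*θ1 + (-2)*a*c*d*θ0 + (6)*a*c^2*d^2 + (-1)*a*b + ((1)/2)*a*b*θi3 + ((5)/2)*a*b*θi2 + (3)*a*b*θi1 + (2)*a*b*θt + (3)*a*b*θ1 + (2)*a*b*θ0 + (-4)*a*b*c*d + ((-3)/2)*a*b^2*c + (-2)*a^2*d*θi2 + (-2)*a^2*d*θi1 + (-2)*a^2*d*θt + (-2)*a^2*d*θ1 + (-2)*a^2*d*θ0 + (2)*a^2*c*d^2 + ((-1)/2)*a^2*b*θi3 + ((-7)/2)*a^2*b*θi2 + (-2)*a^2*b*θi1 + (-2)*a^2*b*θt + (-3)*a^2*b*θ1 + (-2)*a^2*b*θ0 + (6)*a^2*b*c*d + ((-1)/2)*a^2*b^2 + (2)*a^3*d*θi2 + (2)*a^3*d*θi1 + (2)*a^3*d*θt + (2)*a^3*d*θ1 + (2)*a^3*d*θ0 + (-2)*a^3*c*d^2 + ((1)/2)*a^3*b^2 + (-1)*t*θi2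 + (-1)*t*θi1 + (2)*t*θi1*θi2 + (2)*t*θi1^2 + (-1)*t*θt + (2)*t*θt*θi2 + (4)*t*θt*θi1 + (2)*t*θt^2 + (-1)*t*θ1 + (1)*t*θ1*θi2 + (3)*t*θ1*θi1 + (3)*t*θ1*θt + (1)*t*θ1^2 + (-1)*t*θ0 + (1)*t*θ0*θi2 + (3)*t*θ0*θi1 + (3)*t*θ0*θt + (2)*t*θ0*θ1 + (1)*t*θ0^2 + (2)*t*c*d + (2)*t*c*d*θi2 + (-2)*t*c*d*θi1 + (-2)*t*c*d*θt + (-2)*t*c^2*d^2 + (-1)*t*b*θi2 + (-1)*t*b*θi1 + (-1)*t*b*θ1 + (-1)*t*b*θ0 + (2)*t*b*c*d + ((1)/2)*t*b^2*c + (2)*t*a*d*θi2 + (2)*t*a*d*θi1 + (2)*t*a*d*θt + (2)*t*a*d*θ1 + (2)*t*a*d*θ0 + (-2)*t*a*c*d^2 + (1)*t*a*b + (2)*t*a*b*θi2 + (1)*t*a*b*θ1 + (1)*t*a*b*θ0 + (-4)*t*a*b*c*d + ((1)/2)*t*a*b^2 + (-2)*t*a^2*d*θi2 + (-2)*t*a^2*d*θi1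 + (-2)*t*a^2*d*θt + (-2)*t*a^2*d*θ1 + (-2)*t*a^2*d*θ0 + (2)*t*a^2*c*d^2 + ((-1)/2)*t*a^2*b^2) := by
  rw [HVI, trVI_eq θ0 θ1 θt θi1 θi2 θi3 t a b c d 1 one_ne_zero]

lemma hasDerivAt_cubic (c0 c1 c2 c3 x : ℂ) :
    HasDerivAt (fun y : ℂ => c0 + c1 * y + c2 * y ^ 2 + c3 * y ^ 3)
      (c1 + 2 * c2 * x + 3 * c3 * x ^ 2) x := by
  have h := (((hasDerivAt_const x c0).add ((hasDerivAt_id' (x := x)).const_mul c1)).add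
      ((hasDerivAt_pow 2 x).const_mul c2)).add ((hasDerivAt_pow 3 x).const_mul c3)
  exact h.congr_deriv (g' := c1 + 2 * c2 * x + 3 * c3 * x ^ 2) (by push_cast; ring)

set_option maxHeartbeats 4000000 in
lemma hasDerivAt_HVI_a (θ0 θ1 θt θi1 θi2 θi3 t b c d a : ℂ) :
    HasDerivAt (fun x : ℂ => HVI θ0 θ1 θt θi1 θi2 θi3 t x b c d)
      ((t*(t-1))⁻¹ * (((2)*θi2^2 + (2)*θ1*θi2 + (-2)*c*d*θi3 + (-8)*c*d*θi2 + (-2)*c*d*θi1 + (-2)*c*d*θt + (-6)*c*d*θ1 + (-2)*c*d*θ0 + (6)*c^2*d^2 + (-1)*b + ((1)/2)*b*θi3 + ((5)/2)*b*θi2 + (3)*b*θi1 + (2)*b*θt + (3)*b*θ1 + (2)*b*θ0 + (-4)*b*c*d + ((-3)/2)*b^2*c + (2)*t*d*θi2 + (2)*t*d*θi1 + (2)*t*d*θt + (2)*t*d*θ1 + (2)*t*d*θ0 + (-2)*t*c*d^2 + (1)*t*b + (2)*t*b*θi2 + (1)*t*b*θ1 + (1)*t*b*θ0 + (-4)*t*b*c*d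 + ((1)/2)*t*b^2) + 2 * ((-2)*d*θi2 + (-2)*d*θi1 + (-2)*d*θt + (-2)*d*θ1 + (-2)*d*θ0 + (2)*c*d^2 + ((-1)/2)*b*θi3 + ((-7)/2)*b*θi2 + (-2)*b*θi1 + (-2)*b*θt + (-3)*b*θ1 + (-2)*b*θ0 + (6)*b*c*d + ((-1)/2)*b^2 + (-2)*t*d*θi2 + (-2)*t*d*θi1 + (-2)*t*d*θt + (-2)*t*d*θ1 + (-2)*t*d*θ0 + (2)*t*c*d^2 + ((-1)/2)*t*b^2) * a + 3 * ((2)*d*θi2 + (2)*d*θi1 + (2)*d*θt + (2)*d*θ1 + (2)*d*θ0 + (-2)*c*d^2 + ((1)/2)*b^2) * a ^ 2)) a := by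
  have h : (fun x : ℂ => HVI θ0 θ1 θt θi1 θi2 θi3 t x b c d)
      = fun x : ℂ => (t*(t-1))⁻¹ * (((1)*θi2 + (-1)*θi2^2 + (1)*θi1 + (-2)*θi1*θi2 + (-1)*θi1^2 + (1)*θt + (-1)*θt*θi2 + (-1)*θt*θi1 + (1)*θ1 + (-2)*θ1*θi2 + (-2)*θ1*θi1 + (-1)*θ1*θt + (-1)*θ1^2 + (1)*θ0 + (-1)*θ0*θi2 + (-1)*θ0*θi1 + (-1)*θ0*θ1 + (-2)*c*d + (1)*c*d*θi3 + (3)*c*d*θi2 + (4)*c*d*θi1 + (2)*c*d*θt + (4)*c*d*θ1 + (2)*c*d*θ0 + (-2)*c^2*d^2 + ((1)/2)*b*c*θi3 + ((3)/2)*b*c*θi2 + (1)*b*c*θ1 + (-2)*b*c^2*d + ((1)/2)*b^2*c + (-1)*t*θi2 + (-1)*t*θi1 + (2)*t*θi1*θi2 + (2)*t*θi1^2 + (-1)*t*θt + (2)*t*θt*θi2 + (4)*t*θt*θi1 + (2)*t*θt^2 + (-1)*t*θ1 + (1)*t*θ1*θi2 + (3)*t*θ1*θi1 + (3)*t*θ1*θt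 + (1)*t*θ1^2 + (-1)*t*θ0 + (1)*t*θ0*θi2 + (3)*t*θ0*θi1 + (3)*t*θ0*θt + (2)*t*θ0*θ1 + (1)*t*θ0^2 + (2)*t*c*d + (2)*t*c*d*θi2 + (-2)*t*c*d*θi1 + (-2)*t*c*d*θt + (-2)*t*c^2*d^2 + (-1)*t*b*θi2 + (-1)*t*b*θi1 + (-1)*t*b*θ1 + (-1)*t*b*θ0 + (2)*t*b*c*d + ((1)/2)*t*b^2*c) + ((2)*θi2^2 + (2)*θ1*θi2 + (-2)*c*d*θi3 + (-8)*c*d*θi2 + (-2)*c*d*θi1 + (-2)*c*d*θt + (-6)*c*d*θ1 + (-2)*c*d*θ0 + (6)*c^2*d^2 + (-1)*b + ((1)/2)*b*θi3 + ((5)/2)*b*θi2 + (3)*b*θi1 + (2)*b*θt + (3)*b*θ1 + (2)*b*θ0 + (-4)*b*c*d + ((-3)/2)*b^2*c + (2)*t*d*θi2 + (2)*t*d*θi1 + (2)*t*d*θt + (2)*t*d*θ1 + (2)*t*d*θ0 + (-2)*t*c*d^2 + (1)*t*b + (2)*t*b*θi2 + (1)*t*b*θ1 + (1)*t*b*θ0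 + (-4)*t*b*c*d + ((1)/2)*t*b^2) * x + ((-2)*d*θi2 + (-2)*d*θi1 + (-2)*d*θt + (-2)*d*θ1 + (-2)*d*θ0 + (2)*c*d^2 + ((-1)/2)*b*θi3 + ((-7)/2)*b*θi2 + (-2)*b*θi1 + (-2)*b*θt + (-3)*b*θ1 + (-2)*b*θ0 + (6)*b*c*d + ((-1)/2)*b^2 + (-2)*t*d*θi2 + (-2)*t*d*θi1 + (-2)*t*d*θt + (-2)*t*d*θ1 + (-2)*t*d*θ0 + (2)*t*c*d^2 + ((-1)/2)*t*b^2) * x ^ 2 + ((2)*d*θi2 + (2)*d*θi1 + (2)*d*θt + (2)*d*θ1 + (2)*d*θ0 + (-2)*c*d^2 + ((1)/2)*b^2) * x ^ 3) := by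
    funext x
    rw [HVI_eq]
    ring
  rw [h]
  exact (hasDerivAt_cubic _ _ _ _ a).const_mul _

set_option maxHeartbeats 4000000 in
lemma hasDerivAt_HVI_b (θ0 θ1 θt θi1 θi2 θi3 t a c d b : ℂ) :
    HasDerivAt (fun x : ℂ => HVI θ0 θ1 θt θi1 θi2 θi3 t a x c d)
      ((t*(t-1))⁻¹ * ((((1)/2)*c*θi3 + ((3)/2)*c*θi2 + (1)*c*θ1 + (-2)*c^2*d + (-1)*a + ((1)/2)*a*θi3 + ((5)/2)*a*θi2 + (3)*a*θi1 + (2)*a*θt + (3)*a*θ1 + (2)*a*θ0 + (-4)*a*c*d + ((-1)/2)*a^2*θi3 + ((-7)/2)*a^2*θi2 + (-2)*a^2*θi1 + (-2)*a^2*θt + (-3)*a^2*θ1 + (-2)*a^2*θ0 + (6)*a^2*c*d + (-1)*t*θi2 + (-1)*t*θi1 + (-1)*t*θ1 + (-1)*t*θ0 + (2)*t*c*d + (1)*t*a + (2)*t*a*θi2 + (1)*t*a*θ1 + (1)*t*a*θ0 + (-4)*t*a*c*d) + 2 * (((1)/2)*c + ((-3)/2)*a*c + ((-1)/2)*a^2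 + ((1)/2)*a^3 + ((1)/2)*t*c + ((1)/2)*t*a + ((-1)/2)*t*a^2) * b + 3 * (0) * b ^ 2)) b := by
  have h : (fun x : ℂ => HVI θ0 θ1 θt θi1 θi2 θi3 t a x c d)
      = fun x : ℂ => (t*(t-1))⁻¹ * (((1)*θi2 + (-1)*θi2^2 + (1)*θi1 + (-2)*θi1*θi2 + (-1)*θi1^2 + (1)*θt + (-1)*θt*θi2 + (-1)*θt*θi1 + (1)*θ1 + (-2)*θ1*θi2 + (-2)*θ1*θi1 + (-1)*θ1*θt + (-1)*θ1^2 + (1)*θ0 + (-1)*θ0*θi2 + (-1)*θ0*θi1 + (-1)*θ0*θ1 + (-2)*c*d + (1)*c*d*θi3 + (3)*c*d*θi2 + (4)*c*d*θi1 + (2)*c*d*θt + (4)*c*d*θ1 + (2)*c*d*θ0 + (-2)*c^2*d^2 + (2)*a*θi2^2 + (2)*a*θ1*θi2 + (-2)*a*c*d*θi3 + (-8)*a*c*d*θi2 + (-2)*a*c*d*θi1 + (-2)*a*c*d*θt + (-6)*a*c*d*θ1 + (-2)*a*c*d*θ0 + (6)*a*c^2*d^2 + (-2)*a^2*d*θi2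 + (-2)*a^2*d*θi1 + (-2)*a^2*d*θt + (-2)*a^2*d*θ1 + (-2)*a^2*d*θ0 + (2)*a^2*c*d^2 + (2)*a^3*d*θi2 + (2)*a^3*d*θi1 + (2)*a^3*d*θt + (2)*a^3*d*θ1 + (2)*a^3*d*θ0 + (-2)*a^3*c*d^2 + (-1)*t*θi2 + (-1)*t*θi1 + (2)*t*θi1*θi2 + (2)*t*θi1^2 + (-1)*t*θt + (2)*t*θt*θi2 + (4)*t*θt*θi1 + (2)*t*θt^2 + (-1)*t*θ1 + (1)*t*θ1*θi2 + (3)*t*θ1*θi1 + (3)*t*θ1*θt + (1)*t*θ1^2 + (-1)*t*θ0 + (1)*t*θ0*θi2 + (3)*t*θ0*θi1 + (3)*t*θ0*θt + (2)*t*θ0*θ1 + (1)*t*θ0^2 + (2)*t*c*d + (2)*t*c*d*θi2 + (-2)*t*c*d*θi1 + (-2)*t*c*d*θt + (-2)*t*c^2*d^2 + (2)*t*a*d*θi2 + (2)*t*a*d*θi1 + (2)*t*a*d*θt + (2)*t*a*d*θ1 + (2)*t*a*d*θ0 + (-2)*t*a*c*d^2 + (-2)*t*a^2*d*θi2 + (-2)*t*a^2*d*θi1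 + (-2)*t*a^2*d*θt + (-2)*t*a^2*d*θ1 + (-2)*t*a^2*d*θ0 + (2)*t*a^2*c*d^2) + (((1)/2)*c*θi3 + ((3)/2)*c*θi2 + (1)*c*θ1 + (-2)*c^2*d + (-1)*a + ((1)/2)*a*θi3 + ((5)/2)*a*θi2 + (3)*a*θi1 + (2)*a*θt + (3)*a*θ1 + (2)*a*θ0 + (-4)*a*c*d + ((-1)/2)*a^2*θi3 + ((-7)/2)*a^2*θi2 + (-2)*a^2*θi1 + (-2)*a^2*θt + (-3)*a^2*θ1 + (-2)*a^2*θ0 + (6)*a^2*c*d + (-1)*t*θi2 + (-1)*t*θi1 + (-1)*t*θ1 + (-1)*t*θ0 + (2)*t*c*d + (1)*t*a + (2)*t*a*θi2 + (1)*t*a*θ1 + (1)*t*a*θ0 + (-4)*t*a*c*d) * x + (((1)/2)*c + ((-3)/2)*a*c + ((-1)/2)*a^2 + ((1)/2)*a^3 + ((1)/2)*t*c + ((1)/2)*t*a + ((-1)/2)*t*a^2) * x ^ 2 + (0) * x ^ 3) := by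
    funext x
    rw [HVI_eq]
    ring
  rw [h]
  exact (hasDerivAt_cubic _ _ _ _ b).const_mul _

set_option maxHeartbeats 4000000 in
lemma hasDerivAt_HVI_c (θ0 θ1 θt θi1 θi2 θi3 t a b d c : ℂ) :
    HasDerivAt (fun x : ℂ => HVI θ0 θ1 θt θi1 θi2 θi3 t a b x d)
      ((t*(t-1))⁻¹ * (((-2)*d + (1)*d*θi3 + (3)*d*θi2 + (4)*d*θi1 + (2)*d*θt + (4)*d*θ1 + (2)*d*θ0 + ((1)/2)*b*θi3 + ((3)/2)*b*θi2 + (1)*b*θ1 + ((1)/2)*b^2 + (-2)*a*d*θi3 + (-8)*a*d*θi2 + (-2)*a*d*θi1 + (-2)*a*d*θt + (-6)*a*d*θ1 + (-2)*a*d*θ0 + (-4)*a*b*d + ((-3)/2)*a*b^2 + (2)*a^2*d^2 + (6)*a^2*b*d + (-2)*a^3*d^2 + (2)*t*d + (2)*t*d*θi2 + (-2)*t*d*θi1 + (-2)*t*d*θt + (2)*t*b*d + ((1)/2)*t*b^2 + (-2)*t*a*d^2 + (-4)*t*a*b*d + (2)*t*a^2*d^2) + 2 * ((-2)*d^2 +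 (-2)*b*d + (6)*a*d^2 + (-2)*t*d^2) * c + 3 * (0) * c ^ 2)) c := by
  have h : (fun x : ℂ => HVI θ0 θ1 θt θi1 θi2 θi3 t a b x d)
      = fun x : ℂ => (t*(t-1))⁻¹ * (((1)*θi2 + (-1)*θi2^2 + (1)*θi1 + (-2)*θi1*θi2 + (-1)*θi1^2 + (1)*θt + (-1)*θt*θi2 + (-1)*θt*θi1 + (1)*θ1 + (-2)*θ1*θi2 + (-2)*θ1*θi1 + (-1)*θ1*θt + (-1)*θ1^2 + (1)*θ0 + (-1)*θ0*θi2 + (-1)*θ0*θi1 + (-1)*θ0*θ1 + (2)*a*θi2^2 + (2)*a*θ1*θi2 + (-1)*a*b + ((1)/2)*a*b*θi3 + ((5)/2)*a*b*θi2 + (3)*a*b*θi1 + (2)*a*b*θt + (3)*a*b*θ1 + (2)*a*b*θ0 + (-2)*a^2*d*θi2 + (-2)*a^2*d*θi1 + (-2)*a^2*d*θt + (-2)*a^2*d*θ1 + (-2)*a^2*d*θ0 + ((-1)/2)*a^2*b*θi3 + ((-7)/2)*a^2*b*θi2 + (-2)*a^2*b*θi1 + (-2)*a^2*b*θt + (-3)*a^2*b*θ1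 + (-2)*a^2*b*θ0 + ((-1)/2)*a^2*b^2 + (2)*a^3*d*θi2 + (2)*a^3*d*θi1 + (2)*a^3*d*θt + (2)*a^3*d*θ1 + (2)*a^3*d*θ0 + ((1)/2)*a^3*b^2 + (-1)*t*θi2 + (-1)*t*θi1 + (2)*t*θi1*θi2 + (2)*t*θi1^2 + (-1)*t*θt + (2)*t*θt*θi2 + (4)*t*θt*θi1 + (2)*t*θt^2 + (-1)*t*θ1 + (1)*t*θ1*θi2 + (3)*t*θ1*θi1 + (3)*t*θ1*θt + (1)*t*θ1^2 + (-1)*t*θ0 + (1)*t*θ0*θi2 + (3)*t*θ0*θi1 + (3)*t*θ0*θt + (2)*t*θ0*θ1 + (1)*t*θ0^2 + (-1)*t*b*θi2 + (-1)*t*b*θi1 + (-1)*t*b*θ1 + (-1)*t*b*θ0 + (2)*t*a*d*θi2 + (2)*t*a*d*θi1 + (2)*t*a*d*θt + (2)*t*a*d*θ1 + (2)*t*a*d*θ0 + (1)*t*a*b + (2)*t*a*b*θi2 + (1)*t*a*b*θ1 + (1)*t*a*b*θ0 + ((1)/2)*t*a*b^2 + (-2)*t*a^2*d*θi2 + (-2)*t*a^2*d*θi1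 + (-2)*t*a^2*d*θt + (-2)*t*a^2*d*θ1 + (-2)*t*a^2*d*θ0 + ((-1)/2)*t*a^2*b^2) + ((-2)*d + (1)*d*θi3 + (3)*d*θi2 + (4)*d*θi1 + (2)*d*θt + (4)*d*θ1 + (2)*d*θ0 + ((1)/2)*b*θi3 + ((3)/2)*b*θi2 + (1)*b*θ1 + ((1)/2)*b^2 + (-2)*a*d*θi3 + (-8)*a*d*θi2 + (-2)*a*d*θi1 + (-2)*a*d*θt + (-6)*a*d*θ1 + (-2)*a*d*θ0 + (-4)*a*b*d + ((-3)/2)*a*b^2 + (2)*a^2*d^2 + (6)*a^2*b*d + (-2)*a^3*d^2 + (2)*t*d + (2)*t*d*θi2 + (-2)*t*d*θi1 + (-2)*t*d*θt + (2)*t*b*d + ((1)/2)*t*b^2 + (-2)*t*a*d^2 + (-4)*t*a*b*d + (2)*t*a^2*d^2) * x + ((-2)*d^2 + (-2)*b*d + (6)*a*d^2 + (-2)*t*d^2) * x ^ 2 + (0) * x ^ 3) := by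
    funext x
    rw [HVI_eq]
    ring
  rw [h]
  exact (hasDerivAt_cubic _ _ _ _ c).const_mul _

set_option maxHeartbeats 4000000 in
lemma hasDerivAt_HVI_d (θ0 θ1 θt θi1 θi2 θi3 t a b c d : ℂ) :
    HasDerivAt (fun x : ℂ => HVI θ0 θ1 θt θi1 θi2 θi3 t a b c x)
      ((t*(t-1))⁻¹ * (((-2)*c + (1)*c*θi3 + (3)*c*θi2 + (4)*c*θi1 + (2)*c*θt + (4)*c*θ1 + (2)*c*θ0 + (-2)*b*c^2 + (-2)*a*c*θi3 + (-8)*a*c*θi2 + (-2)*a*c*θi1 + (-2)*a*c*θt + (-6)*a*c*θ1 + (-2)*a*c*θ0 + (-4)*a*b*c + (-2)*a^2*θi2 + (-2)*a^2*θi1 + (-2)*a^2*θt + (-2)*a^2*θ1 + (-2)*a^2*θ0 + (6)*a^2*b*c + (2)*a^3*θi2 + (2)*a^3*θi1 + (2)*a^3*θt + (2)*a^3*θ1 + (2)*a^3*θ0 + (2)*t*c + (2)*t*c*θi2 + (-2)*t*c*θi1 + (-2)*t*c*θt + (2)*t*b*c + (2)*t*a*θi2 + (2)*t*a*θi1 +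 (2)*t*a*θt + (2)*t*a*θ1 + (2)*t*a*θ0 + (-4)*t*a*b*c + (-2)*t*a^2*θi2 + (-2)*t*a^2*θi1 + (-2)*t*a^2*θt + (-2)*t*a^2*θ1 + (-2)*t*a^2*θ0) + 2 * ((-2)*c^2 + (6)*a*c^2 + (2)*a^2*c + (-2)*a^3*c + (-2)*t*c^2 + (-2)*t*a*c + (2)*t*a^2*c) * d + 3 * (0) * d ^ 2)) d := by
  have h : (fun x : ℂ => HVI θ0 θ1 θt θi1 θi2 θi3 t a b c x)
      = fun x : ℂ => (t*(t-1))⁻¹ * (((1)*θi2 + (-1)*θi2^2 + (1)*θi1 + (-2)*θi1*θi2 + (-1)*θi1^2 + (1)*θt + (-1)*θt*θi2 + (-1)*θt*θi1 + (1)*θ1 + (-2)*θ1*θi2 + (-2)*θ1*θi1 + (-1)*θ1*θt + (-1)*θ1^2 + (1)*θ0 + (-1)*θ0*θi2 + (-1)*θ0*θi1 + (-1)*θ0*θ1 + ((1)/2)*b*c*θi3 + ((3)/2)*b*c*θi2 + (1)*b*c*θ1 + ((1)/2)*b^2*c + (2)*a*θi2^2 + (2)*a*θ1*θi2 + (-1)*a*b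 + ((1)/2)*a*b*θi3 + ((5)/2)*a*b*θi2 + (3)*a*b*θi1 + (2)*a*b*θt + (3)*a*b*θ1 + (2)*a*b*θ0 + ((-3)/2)*a*b^2*c + ((-1)/2)*a^2*b*θi3 + ((-7)/2)*a^2*b*θi2 + (-2)*a^2*b*θi1 + (-2)*a^2*b*θt + (-3)*a^2*b*θ1 + (-2)*a^2*b*θ0 + ((-1)/2)*a^2*b^2 + ((1)/2)*a^3*b^2 + (-1)*t*θi2 + (-1)*t*θi1 + (2)*t*θi1*θi2 + (2)*t*θi1^2 + (-1)*t*θt + (2)*t*θt*θi2 + (4)*t*θt*θi1 + (2)*t*θt^2 + (-1)*t*θ1 + (1)*t*θ1*θi2 + (3)*t*θ1*θi1 + (3)*t*θ1*θt + (1)*t*θ1^2 + (-1)*t*θ0 + (1)*t*θ0*θi2 + (3)*t*θ0*θi1 + (3)*t*θ0*θt + (2)*t*θ0*θ1 + (1)*t*θ0^2 + (-1)*t*b*θi2 + (-1)*t*b*θi1 + (-1)*t*b*θ1 + (-1)*t*b*θ0 + ((1)/2)*t*b^2*c + (1)*t*a*b + (2)*t*a*b*θi2 + (1)*t*a*b*θ1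 + (1)*t*a*b*θ0 + ((1)/2)*t*a*b^2 + ((-1)/2)*t*a^2*b^2) + ((-2)*c + (1)*c*θi3 + (3)*c*θi2 + (4)*c*θi1 + (2)*c*θt + (4)*c*θ1 + (2)*c*θ0 + (-2)*b*c^2 + (-2)*a*c*θi3 + (-8)*a*c*θi2 + (-2)*a*c*θi1 + (-2)*a*c*θt + (-6)*a*c*θ1 + (-2)*a*c*θ0 + (-4)*a*b*c + (-2)*a^2*θi2 + (-2)*a^2*θi1 + (-2)*a^2*θt + (-2)*a^2*θ1 + (-2)*a^2*θ0 + (6)*a^2*b*c + (2)*a^3*θi2 + (2)*a^3*θi1 + (2)*a^3*θt + (2)*a^3*θ1 + (2)*a^3*θ0 + (2)*t*c + (2)*t*c*θi2 + (-2)*t*c*θi1 + (-2)*t*c*θt + (2)*t*b*c + (2)*t*a*θi2 + (2)*t*a*θi1 + (2)*t*a*θt + (2)*t*a*θ1 + (2)*t*a*θ0 + (-4)*t*a*b*c + (-2)*t*a^2*θi2 + (-2)*t*a^2*θi1 + (-2)*t*a^2*θt + (-2)*t*a^2*θ1 + (-2)*t*a^2*θ0) * x + ((-2)*c^2 + (6)*a*c^2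 + (2)*a^2*c + (-2)*a^3*c + (-2)*t*c^2 + (-2)*t*a*c + (2)*t*a^2*c) * x ^ 2 + (0) * x ^ 3) := by
    funext x
    rw [HVI_eq]
    ring
  rw [h]
  exact (hasDerivAt_cubic _ _ _ _ d).const_mul _

set_option maxHeartbeats 4000000 in
lemma rhsQ_eq (θ0 θ θt θi1 θi2 t a b c d v : ℂ) (hv : v ≠ 0) :
    (Qm a c v - t • (1 : Matrix (Fin 2) (Fin 2) ℂ)) * Pm b d c (θ + θi1 + θi2) v * Qm a c v * (Qm a c v - 1)
      + Qm a c v * (Qm a c v - 1) * Pm b d c (θ + θi1 + θi2) v * (Qm a c v - t • (1 : Matrix (Fin 2) (Fin 2) ℂ))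
      + (θ0 + 1) • (Qm a c v * (Qm a c v - 1))
      + (θ + 2 * θi1 - 1) • (Qm a c v * (Qm a c v - t • (1 : Matrix (Fin 2) (Fin 2) ℂ)))
      + θt • ((Qm a c v - 1) * (Qm a c v - t • (1 : Matrix (Fin 2) (Fin 2) ℂ)))
    = !![(1)*c*θi2 + (-1)*c*θi1 + (-1)*c*θt + (-1)*c*θ0 + (-2)*c^2*d + (1)*b*c + (-1)*a + (2)*a*θ + (2)*a*θi2 + (2)*a*θi1 + (-1)*a*θt + (-1)*a*θ0 + (-4)*a*c*d + (-3)*a*b*c + (-2)*a^2*θ + (-3)*a^2*θi2 + (-1)*a^2*θi1 + (1)*a^2*θt + (1)*a^2*θ0 + (6)*a^2*c*d + (-1)*a^2*b + (1)*a^3*b + (-1)*t*θ + (-1)*t*θi2 + (-1)*t*θi1 + (1)*t*θt + (2)*t*c*d + (1)*t*b*c + (1)*t*a + (1)*t*a*θ + (2)*t*a*θi2 + (-1)*t*a*θt + (-4)*t*a*c*d + (1)*t*a*b + (-1)*t*a^2*b,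
        (-1)*v + (2)*v*θ + (2)*v*θi2 + (2)*v*θi1 + (-1)*v*θt + (-1)*v*θ0 + (-2)*c*d*v + (-1)*b*c*v + (-2)*a*v*θ + (-4)*a*v*θi2 + (2)*a*v*θt + (2)*a*v*θ0 + (6)*a*c*d*v + (-2)*a*b*v + (2)*a^2*d*v + (3)*a^2*b*v + (-2)*a^3*d*v + (1)*t*v + (-1)*t*v*θ + (-2)*t*v*θi1 + (-1)*t*v*θt + (-2)*t*c*d*v + (1)*t*b*v + (-2)*t*a*d*v + (-2)*t*a*b*v + (2)*t*a^2*d*v;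
        (1)*c*v⁻¹ + (1)*c*v⁻¹*θt + (1)*c*v⁻¹*θ0 + (2)*c^2*d*v⁻¹ + (1)*b*c^2*v⁻¹ + (2)*a*c*v⁻¹*θi2 + (-2)*a*c*v⁻¹*θi1 + (-2)*a*c*v⁻¹*θt + (-2)*a*c*v⁻¹*θ0 + (-6)*a*c^2*d*v⁻¹ + (2)*a*b*c*v⁻¹ + (2)*a^2*v⁻¹*θ + (2)*a^2*v⁻¹*θi2 + (2)*a^2*v⁻¹*θi1 + (-2)*a^2*c*d*v⁻¹ + (-3)*a^2*b*c*v⁻¹ + (-2)*a^3*v⁻¹*θ + (-2)*a^3*v⁻¹*θi2 + (-2)*a^3*v⁻¹*θi1 + (2)*a^3*c*d*v⁻¹ + (-1)*t*c*v⁻¹ + (-1)*t*c*v⁻¹*θ + (-2)*t*c*v⁻¹*θi2 + (1)*t*c*v⁻¹*θt + (2)*t*c^2*d*v⁻¹ + (-1)*t*b*c*v⁻¹ + (-2)*t*a*v⁻¹*θ + (-2)*t*a*v⁻¹*θi2 + (-2)*t*a*v⁻¹*θi1 + (2)*t*a*c*d*v⁻¹ + (2)*t*a*b*c*v⁻¹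 + (2)*t*a^2*v⁻¹*θ + (2)*t*a^2*v⁻¹*θi2 + (2)*t*a^2*v⁻¹*θi1 + (-2)*t*a^2*c*d*v⁻¹,
        (1)*c*θi2 + (-1)*c*θi1 + (-1)*c*θt + (-1)*c*θ0 + (-2)*c^2*d + (1)*b*c + (-1)*a + (2)*a*θ + (2)*a*θi2 + (2)*a*θi1 + (-1)*a*θt + (-1)*a*θ0 + (-4)*a*c*d + (-3)*a*b*c + (-2)*a^2*θ + (-3)*a^2*θi2 + (-1)*a^2*θi1 + (1)*a^2*θt + (1)*a^2*θ0 + (6)*a^2*c*d + (-1)*a^2*b + (1)*a^3*b + (-1)*t*θ + (-1)*t*θi2 + (-1)*t*θi1 + (1)*t*θt + (2)*t*c*d + (1)*t*b*c + (1)*t*a + (1)*t*a*θ + (2)*t*a*θi2 + (-1)*t*a*θt + (-4)*t*a*c*d + (1)*t*a*b + (-1)*t*a^2*b] := by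
  have hvw : v * v⁻¹ = 1 := mul_inv_cancel₀ hv
  ext i j
  fin_cases i <;> fin_cases j
  · simp only [Qm, Pm, Matrix.trace_fin_two, Matrix.mul_apply, Fin.sum_univ_two, Matrix.sub_apply,
    Matrix.add_apply, Matrix.smul_apply, Matrix.neg_apply, Matrix.one_fin_two, diag_two,
    Matrix.cons_val', Matrix.cons_val_zero, Matrix.cons_val_one, Matrix.head_cons, Matrix.head_fin_const,
    Matrix.empty_val', Matrix.cons_val_fin_one, Matrix.of_apply, smul_eq_mul, Fin.zero_eta, Fin.mk_one]
    linear_combination ((1)*c*θi2 + (-1)*c*θi1 + (-1)*c*θt + (-1)*c*θ0 + (1)*c*v*v⁻¹*θ + (1)*c*v*v⁻¹*θi2 + (1)*c*v*v⁻¹*θi1 + (-2)*c^2*d + (-2)*c^2*d*v*v⁻¹ + (1)*b*c + (2)*a*θ + (2)*a*θi2 + (2)*a*θi1 + (-4)*a*c*d + (-3)*a*b*c + (-3)*a^2*θ + (-3)*a^2*θi2 + (-3)*a^2*θi1 + (6)*a^2*c*d + (-1)*t*θ + (-1)*t*θi2 + (-1)*t*θi1 + (2)*t*c*d + (1)*t*b*c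 + (2)*t*a*θ + (2)*t*a*θi2 + (2)*t*a*θi1 + (-4)*t*a*c*d) * hvw
  · simp only [Qm, Pm, Matrix.trace_fin_two, Matrix.mul_apply, Fin.sum_univ_two, Matrix.sub_apply,
    Matrix.add_apply, Matrix.smul_apply, Matrix.neg_apply, Matrix.one_fin_two, diag_two,
    Matrix.cons_val', Matrix.cons_val_zero, Matrix.cons_val_one, Matrix.head_cons, Matrix.head_fin_const,
    Matrix.empty_val', Matrix.cons_val_fin_one, Matrix.of_apply, smul_eq_mul, Fin.zero_eta, Fin.mk_one]
    linear_combination ((2)*v*θ + (2)*v*θi2 + (2)*v*θi1 + (-2)*c*d*v + (-1)*b*c*v + (-4)*a*v*θ + (-4)*a*v*θi2 + (-4)*a*v*θi1 + (6)*a*c*d*v + (-2)*t*c*d*v) * hvw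
  · simp only [Qm, Pm, Matrix.trace_fin_two, Matrix.mul_apply, Fin.sum_univ_two, Matrix.sub_apply,
    Matrix.add_apply, Matrix.smul_apply, Matrix.neg_apply, Matrix.one_fin_two, diag_two,
    Matrix.cons_val', Matrix.cons_val_zero, Matrix.cons_val_one, Matrix.head_cons, Matrix.head_fin_const,
    Matrix.empty_val', Matrix.cons_val_fin_one, Matrix.of_apply, smul_eq_mul, Fin.zero_eta, Fin.mk_one]
    linear_combination ((2)*c^2*d*v⁻¹ + (1)*b*c^2*v⁻¹ + (2)*a*c*v⁻¹*θ + (2)*a*c*v⁻¹*θi2 + (2)*a*c*v⁻¹*θi1 + (-6)*a*c^2*d*v⁻¹ + (-2)*t*c*v⁻¹*θ + (-2)*t*c*v⁻¹*θi2 + (-2)*t*c*v⁻¹*θi1 + (2)*t*c^2*d*v⁻¹) * hvw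
  · simp only [Qm, Pm, Matrix.trace_fin_two, Matrix.mul_apply, Fin.sum_univ_two, Matrix.sub_apply,
    Matrix.add_apply, Matrix.smul_apply, Matrix.neg_apply, Matrix.one_fin_two, diag_two,
    Matrix.cons_val', Matrix.cons_val_zero, Matrix.cons_val_one, Matrix.head_cons, Matrix.head_fin_const,
    Matrix.empty_val', Matrix.cons_val_fin_one, Matrix.of_apply, smul_eq_mul, Fin.zero_eta, Fin.mk_one]
    linear_combination ((1)*c*θi2 + (-1)*c*θi1 + (-1)*c*θt + (-1)*c*θ0 + (1)*c*v*v⁻¹*θ + (1)*c*v*v⁻¹*θi2 + (1)*c*v*v⁻¹*θi1 + (-2)*c^2*d + (-2)*c^2*d*v*v⁻¹ + (1)*b*c + (2)*a*θ + (2)*a*θi2 + (2)*a*θi1 + (-4)*a*c*d + (-3)*a*b*c + (-3)*a^2*θ + (-3)*a^2*θi2 + (-3)*a^2*θi1 + (6)*a^2*c*d + (-1)*t*θ + (-1)*t*θi2 + (-1)*t*θi1 + (2)*t*c*d + (1)*t*b*c + (2)*t*a*θ + (2)*t*a*θi2 + (2)*t*a*θi1 + (-4)*t*a*c*d) * hv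w

set_option maxHeartbeats 4000000 in
lemma rhsP_eq (θ0 θ θt θi1 θi2 t a b c d v : ℂ) (hv : v ≠ 0) :
    -((Qm a c v - 1) * Pm b d c (θ + θi1 + θi2) v * (Qm a c v - t • (1 : Matrix (Fin 2) (Fin 2) ℂ)) * Pm b d c (θ + θi1 + θi2) v)
      - Pm b d c (θ + θi1 + θi2) v * (Qm a c v - t • (1 : Matrix (Fin 2) (Fin 2) ℂ)) * Pm b d c (θ + θi1 + θi2) v * Qm a c v
      - Pm b d c (θ + θi1 + θi2) v * Qm a c v * (Qm a c v - 1) * Pm b d c (θ + θi1 + θi2) v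
      - ((θ0 + 1) • (Pm b d c (θ + θi1 + θi2) v * (Qm a c v - 1) + Qm a c v * Pm b d c (θ + θi1 + θi2) v)
          + (θ + 2 * θi1 - 1) • (Pm b d c (θ + θi1 + θi2) v * (Qm a c v - t • (1 : Matrix (Fin 2) (Fin 2) ℂ)) + Qm a c v * Pm b d c (θ + θi1 + θi2) v)
          + θt • (Pm b d c (θ + θi1 + θi2) v * (Qm a c v - t • (1 : Matrix (Fin 2) (Fin 2) ℂ)) + (Qm a c v - 1) * Pm b d c (θ + θi1 + θi2) v))
      - ((θ + θi1) * (θ0 + θt + θi1)) • (1 : Matrix (Fin 2) (Fin 2) ℂ)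
    = !![(-1)*θi2*θ + (-1)*θi2^2 + (1)*θt*θi2 + (1)*θ0*θi2 + (1)*c*d*θ + (3)*c*d*θi2 + (-1)*c*d*θi1 + (-2)*c*d*θt + (-2)*c*d*θ0 + (-3)*c^2*d^2 + ((1)/2)*b + (-1)*b*θ + (-1)*b*θi2 + (-1)*b*θi1 + ((1)/2)*b*θt + ((1)/2)*b*θ0 + (2)*b*c*d + ((3)/4)*b^2*c + (2)*a*d*θ + (2)*a*d*θi2 + (2)*a*d*θi1 + (-2)*a*c*d^2 + (2)*a*b*θ + (3)*a*b*θi2 + (1)*a*b*θi1 + (-1)*a*b*θt + (-1)*a*b*θ0 + (-6)*a*b*c*d + ((1)/2)*a*b^2 + (-3)*a^2*d*θ + (-3)*a^2*d*θi2 + (-3)*a^2*d*θi1 + (3)*a^2*c*d^2 + ((-3)/4)*a^2*b^2 + (-1)*t*d*θ + (-1)*t*d*θi2 + (-1)*t*d*θi1 + (1)*t*c*d^2 + ((-1)/2)*t*b + ((-1)/2)*t*b*θ + (-1)*t*b*θi2 + ((1)/2)*t*b*θt + (2)*t*b*c*d + ((-1)/4)*t*b^2 + (2)*t*a*d*θ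 + (2)*t*a*d*θi2 + (2)*t*a*d*θi1 + (-2)*t*a*c*d^2 + ((1)/2)*t*a*b^2,
        (-1)*d*v + (-1)*d*v*θt + (-1)*d*v*θ0 + (-2)*c*d^2*v + (1)*b*v*θi2 + (-1)*b*v*θi1 + (-1)*b*v*θt + (-1)*b*v*θ0 + (-3)*b*c*d*v + ((1)/2)*b^2*v + (-2)*a*d*v*θi2 + (2)*a*d*v*θi1 + (2)*a*d*v*θt + (2)*a*d*v*θ0 + (6)*a*c*d^2*v + (-2)*a*b*d*v + ((-3)/2)*a*b^2*v + (3)*a^2*b*d*v + (1)*t*d*v + (1)*t*d*v*θ + (2)*t*d*v*θi2 + (-1)*t*d*v*θt + (-2)*t*c*d^2*v + (1)*t*b*d*v + ((1)/2)*t*b^2*v + (-2)*t*a*b*d*v;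
        (-1)*v⁻¹*θ + (2)*v⁻¹*θ^2 + (-1)*v⁻¹*θi2 + (4)*v⁻¹*θi2*θ + (2)*v⁻¹*θi2^2 + (-1)*v⁻¹*θi1 + (4)*v⁻¹*θi1*θ + (4)*v⁻¹*θi1*θi2 + (2)*v⁻¹*θi1^2 + (-1)*v⁻¹*θt*θ + (-1)*v⁻¹*θt*θi2 + (-1)*v⁻¹*θt*θi1 + (-1)*v⁻¹*θ0*θ + (-1)*v⁻¹*θ0*θi2 + (-1)*v⁻¹*θ0*θi1 + (1)*c*d*v⁻¹ + (-4)*c*d*v⁻¹*θ + (-4)*c*d*v⁻¹*θi2 + (-4)*c*d*v⁻¹*θi1 + (1)*c*d*v⁻¹*θt + (1)*c*d*v⁻¹*θ0 + (2)*c^2*d^2*v⁻¹ + (-1)*b*c*v⁻¹*θ + (-2)*b*c*v⁻¹*θi2 + (1)*b*c*v⁻¹*θt + (1)*b*c*v⁻¹*θ0 + (3)*b*c^2*d*v⁻¹ + ((-1)/2)*b^2*c*v⁻¹ + (-2)*a*v⁻¹*θ^2 + (-6)*a*v⁻¹*θi2*θ + (-4)*a*v⁻¹*θi2^2 + (-2)*a*v⁻¹*θi1*θ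 + (-4)*a*v⁻¹*θi1*θi2 + (2)*a*v⁻¹*θt*θ + (2)*a*v⁻¹*θt*θi2 + (2)*a*v⁻¹*θt*θi1 + (2)*a*v⁻¹*θ0*θ + (2)*a*v⁻¹*θ0*θi2 + (2)*a*v⁻¹*θ0*θi1 + (8)*a*c*d*v⁻¹*θ + (10)*a*c*d*v⁻¹*θi2 + (6)*a*c*d*v⁻¹*θi1 + (-2)*a*c*d*v⁻¹*θt + (-2)*a*c*d*v⁻¹*θ0 + (-6)*a*c^2*d^2*v⁻¹ + (-2)*a*b*v⁻¹*θ + (-2)*a*b*v⁻¹*θi2 + (-2)*a*b*v⁻¹*θi1 + (2)*a*b*c*d*v⁻¹ + ((3)/2)*a*b^2*c*v⁻¹ + (3)*a^2*b*v⁻¹*θ + (3)*a^2*b*v⁻¹*θi2 + (3)*a^2*b*v⁻¹*θi1 + (-3)*a^2*b*c*d*v⁻¹ + (1)*t*v⁻¹*θ + (-1)*t*v⁻¹*θ^2 + (1)*t*v⁻¹*θi2 + (-1)*t*v⁻¹*θi2*θ + (1)*t*v⁻¹*θi1 + (-3)*t*v⁻¹*θi1*θ + (-2)*t*v⁻¹*θi1*θi2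 + (-2)*t*v⁻¹*θi1^2 + (-1)*t*v⁻¹*θt*θ + (-1)*t*v⁻¹*θt*θi2 + (-1)*t*v⁻¹*θt*θi1 + (-1)*t*c*d*v⁻¹ + (-1)*t*c*d*v⁻¹*θ + (-2)*t*c*d*v⁻¹*θi2 + (1)*t*c*d*v⁻¹*θt + (2)*t*c^2*d^2*v⁻¹ + (1)*t*b*v⁻¹*θ + (1)*t*b*v⁻¹*θi2 + (1)*t*b*v⁻¹*θi1 + (-1)*t*b*c*d*v⁻¹ + ((-1)/2)*t*b^2*c*v⁻¹ + (-2)*t*a*b*v⁻¹*θ + (-2)*t*a*b*v⁻¹*θi2 + (-2)*t*a*b*v⁻¹*θi1 + (2)*t*a*b*c*d*v⁻¹,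
        (-1)*θi2*θ + (-1)*θi2^2 + (1)*θt*θi2 + (1)*θ0*θi2 + (1)*c*d*θ + (3)*c*d*θi2 + (-1)*c*d*θi1 + (-2)*c*d*θt + (-2)*c*d*θ0 + (-3)*c^2*d^2 + ((1)/2)*b + (-1)*b*θ + (-1)*b*θi2 + (-1)*b*θi1 + ((1)/2)*b*θt + ((1)/2)*b*θ0 + (2)*b*c*d + ((3)/4)*b^2*c + (2)*a*d*θ + (2)*a*d*θi2 + (2)*a*d*θi1 + (-2)*a*c*d^2 + (2)*a*b*θ + (3)*a*b*θi2 + (1)*a*b*θi1 + (-1)*a*b*θt + (-1)*a*b*θ0 + (-6)*a*b*c*d + ((1)/2)*a*b^2 + (-3)*a^2*d*θ + (-3)*a^2*d*θi2 + (-3)*a^2*d*θi1 + (3)*a^2*c*d^2 + ((-3)/4)*a^2*b^2 + (-1)*t*d*θ + (-1)*t*d*θi2 + (-1)*t*d*θi1 + (1)*t*c*d^2 + ((-1)/2)*t*b + ((-1)/2)*t*b*θ + (-1)*t*b*θi2 + ((1)/2)*t*b*θt + (2)*t*b*c*d + ((-1)/4)*t*b^2 + (2)*t*a*d*θ + (2)*t*a*d*θi2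 + (2)*t*a*d*θi1 + (-2)*t*a*c*d^2 + ((1)/2)*t*a*b^2] := by
  have hvw : v * v⁻¹ = 1 := mul_inv_cancel₀ hv
  ext i j
  fin_cases i <;> fin_cases j
  · simp only [Qm, Pm, Matrix.trace_fin_two, Matrix.mul_apply, Fin.sum_univ_two, Matrix.sub_apply,
    Matrix.add_apply, Matrix.smul_apply, Matrix.neg_apply, Matrix.one_fin_two, diag_two,
    Matrix.cons_val', Matrix.cons_val_zero, Matrix.cons_val_one, Matrix.head_cons, Matrix.head_fin_const,
    Matrix.empty_val', Matrix.cons_val_fin_one, Matrix.of_apply, smul_eq_mul, Fin.zero_eta, Fin.mk_one]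
    linear_combination ((-1)*θi2*θ + (-1)*θi2^2 + (1)*θi1*θ + (1)*θi1^2 + (1)*θt*θ + (1)*θt*θi2 + (1)*θt*θi1 + (1)*θ0*θ + (1)*θ0*θi2 + (1)*θ0*θi1 + (-1)*v*v⁻¹*θ^2 + (-2)*v*v⁻¹*θi2*θ + (-1)*v*v⁻¹*θi2^2 + (-2)*v*v⁻¹*θi1*θ + (-2)*v*v⁻¹*θi1*θi2 + (-1)*v*v⁻¹*θi1^2 + (1)*c*d*θ + (3)*c*d*θi2 + (-1)*c*d*θi1 + (-2)*c*d*θt + (-2)*c*d*θ0 + (3)*c*d*v*v⁻¹*θ + (3)*c*d*v*v⁻¹*θi2 + (3)*c*d*v*v⁻¹*θi1 + (-3)*c^2*d^2 + (-3)*c^2*d^2*v*v⁻¹ + (-1)*b*θ + (-1)*b*θi2 + (-1)*b*θi1 + (2)*b*c*d + ((3)/4)*b^2*c + (2)*a*d*θ + (2)*a*d*θi2 + (2)*a*d*θi1 + (-2)*a*c*d^2 + (3)*a*b*θ + (3)*a*b*θi2 + (3)*a*b*θi1 + (-6)*a*b*c*d + (-3)*a^2*d*θ + (-3)*a^2*d*θi2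 + (-3)*a^2*d*θi1 + (3)*a^2*c*d^2 + (-1)*t*d*θ + (-1)*t*d*θi2 + (-1)*t*d*θi1 + (1)*t*c*d^2 + (-1)*t*b*θ + (-1)*t*b*θi2 + (-1)*t*b*θi1 + (2)*t*b*c*d + (2)*t*a*d*θ + (2)*t*a*d*θi2 + (2)*t*a*d*θi1 + (-2)*t*a*c*d^2) * hvw
  · simp only [Qm, Pm, Matrix.trace_fin_two, Matrix.mul_apply, Fin.sum_univ_two, Matrix.sub_apply,
    Matrix.add_apply, Matrix.smul_apply, Matrix.neg_apply, Matrix.one_fin_two, diag_two,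
    Matrix.cons_val', Matrix.cons_val_zero, Matrix.cons_val_one, Matrix.head_cons, Matrix.head_fin_const,
    Matrix.empty_val', Matrix.cons_val_fin_one, Matrix.of_apply, smul_eq_mul, Fin.zero_eta, Fin.mk_one]
    linear_combination ((-2)*c*d^2*v + (1)*b*v*θ + (1)*b*v*θi2 + (1)*b*v*θi1 + (-3)*b*c*d*v + (-2)*a*d*v*θ + (-2)*a*d*v*θi2 + (-2)*a*d*v*θi1 + (6)*a*c*d^2*v + (2)*t*d*v*θ + (2)*t*d*v*θi2 + (2)*t*d*v*θi1 + (-2)*t*c*d^2*v) * hvw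
  · simp only [Qm, Pm, Matrix.trace_fin_two, Matrix.mul_apply, Fin.sum_univ_two, Matrix.sub_apply,
    Matrix.add_apply, Matrix.smul_apply, Matrix.neg_apply, Matrix.one_fin_two, diag_two,
    Matrix.cons_val', Matrix.cons_val_zero, Matrix.cons_val_one, Matrix.head_cons, Matrix.head_fin_const,
    Matrix.empty_val', Matrix.cons_val_fin_one, Matrix.of_apply, smul_eq_mul, Fin.zero_eta, Fin.mk_one]
    linear_combination ((2)*v⁻¹*θ^2 + (4)*v⁻¹*θi2*θ + (2)*v⁻¹*θi2^2 + (4)*v⁻¹*θi1*θ + (4)*v⁻¹*θi1*θi2 + (2)*v⁻¹*θi1^2 + (-4)*c*d*v⁻¹*θ + (-4)*c*d*v⁻¹*θi2 + (-4)*c*d*v⁻¹*θi1 + (2)*c^2*d^2*v⁻¹ + (-2)*b*c*v⁻¹*θ + (-2)*b*c*v⁻¹*θi2 + (-2)*b*c*v⁻¹*θi1 + (3)*b*c^2*d*v⁻¹ + (-4)*a*v⁻¹*θ^2 + (-8)*a*v⁻¹*θi2*θ + (-4)*a*v⁻¹*θi2^2 + (-8)*a*v⁻¹*θi1*θ + (-8)*a*v⁻¹*θi1*θi2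 + (-4)*a*v⁻¹*θi1^2 + (10)*a*c*d*v⁻¹*θ + (10)*a*c*d*v⁻¹*θi2 + (10)*a*c*d*v⁻¹*θi1 + (-6)*a*c^2*d^2*v⁻¹ + (-2)*t*c*d*v⁻¹*θ + (-2)*t*c*d*v⁻¹*θi2 + (-2)*t*c*d*v⁻¹*θi1 + (2)*t*c^2*d^2*v⁻¹) * hvw
  · simp only [Qm, Pm, Matrix.trace_fin_two, Matrix.mul_apply, Fin.sum_univ_two, Matrix.sub_apply,
    Matrix.add_apply, Matrix.smul_apply, Matrix.neg_apply, Matrix.one_fin_two, diag_two,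
    Matrix.cons_val', Matrix.cons_val_zero, Matrix.cons_val_one, Matrix.head_cons, Matrix.head_fin_const,
    Matrix.empty_val', Matrix.cons_val_fin_one, Matrix.of_apply, smul_eq_mul, Fin.zero_eta, Fin.mk_one]
    linear_combination ((-1)*θi2*θ + (-1)*θi2^2 + (1)*θi1*θ + (1)*θi1^2 + (1)*θt*θ + (1)*θt*θi2 + (1)*θt*θi1 + (1)*θ0*θ + (1)*θ0*θi2 + (1)*θ0*θi1 + (-1)*v*v⁻¹*θ^2 + (-2)*v*v⁻¹*θi2*θ + (-1)*v*v⁻¹*θi2^2 + (-2)*v*v⁻¹*θi1*θ + (-2)*v*v⁻¹*θi1*θi2 + (-1)*v*v⁻¹*θi1^2 + (1)*c*d*θ + (3)*c*d*θi2 + (-1)*c*d*θi1 + (-2)*c*d*θt + (-2)*c*d*θ0 + (3)*c*d*v*v⁻¹*θ + (3)*c*d*v*v⁻¹*θi2 + (3)*c*d*v*v⁻¹*θi1 + (-3)*c^2*d^2 + (-3)*c^2*d^2*v*v⁻¹ + (-1)*b*θ + (-1)*b*θi2 + (-1)*b*θi1 + (2)*b*c*d + ((3)/4)*b^2*c + (2)*a*d*θ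 + (2)*a*d*θi2 + (2)*a*d*θi1 + (-2)*a*c*d^2 + (3)*a*b*θ + (3)*a*b*θi2 + (3)*a*b*θi1 + (-6)*a*b*c*d + (-3)*a^2*d*θ + (-3)*a^2*d*θi2 + (-3)*a^2*d*θi1 + (3)*a^2*c*d^2 + (-1)*t*d*θ + (-1)*t*d*θi2 + (-1)*t*d*θi1 + (1)*t*c*d^2 + (-1)*t*b*θ + (-1)*t*b*θi2 + (-1)*t*b*θi1 + (2)*t*b*c*d + (2)*t*a*d*θ + (2)*t*a*d*θi2 + (2)*t*a*d*θi1 + (-2)*t*a*c*d^2) * hvw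
set_option maxHeartbeats 8000000 in
theorem matrix_PVI_is_Hamiltonian
    (θ0 θ1 θt θi1 θi2 θi3 : ℂ)
    (hFuchs : 2 * (θ0 + θ1 + θt + θi1) + θi2 + θi3 = 0)
    (θ : ℂ) (hθ : θ = θ0 + θ1 + θt)
    (α β : ℝ) (h0 : (0:ℝ) ∉ Set.Ioo α β) (h1 : (1:ℝ) ∉ Set.Ioo α β)
    (q1 q2 p1 p2 u : ℝ → ℂ) (hu : ∀ s ∈ Set.Ioo α β, u s ≠ 0)
    (DQ DP : ℝ → Matrix (Fin 2) (Fin 2) ℂ)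
    (hDQ : ∀ s ∈ Set.Ioo α β, ∀ i j,
      HasDerivAt (fun r : ℝ => Qm (q1 r) (q2 r) (u r) i j) (DQ s i j) s)
    (hDP : ∀ s ∈ Set.Ioo α β, ∀ i j,
      HasDerivAt (fun r : ℝ => Pm (p1 r) (p2 r) (q2 r) (θ + θi1 + θi2) (u r) i j) (DP s i j) s)
    (heqQ : ∀ s ∈ Set.Ioo α β,
      (fun Q P : Matrix (Fin 2) (Fin 2) ℂ =>
        ((s:ℂ) * ((s:ℂ) - 1)) • DQ s =
          (Q - (s:ℂ) • (1 : Matrix (Fin 2) (Fin 2) ℂ)) * P * Q * (Q - 1)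
          + Q * (Q - 1) * P * (Q - (s:ℂ) • (1 : Matrix (Fin 2) (Fin 2) ℂ))
          + (θ0 + 1) • (Q * (Q - 1))
          + (θ + 2 * θi1 - 1) • (Q * (Q - (s:ℂ) • (1 : Matrix (Fin 2) (Fin 2) ℂ)))
          + θt • ((Q - 1) * (Q - (s:ℂ) • (1 : Matrix (Fin 2) (Fin 2) ℂ))))
        (Qm (q1 s) (q2 s) (u s)) (Pm (p1 s) (p2 s) (q2 s) (θ + θi1 + θi2) (u s)))
    (heqP : ∀ s ∈ Set.Ioo α β,
      (fun Q P : Matrix (Fin 2) (Fin 2) ℂ =>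
        ((s:ℂ) * ((s:ℂ) - 1)) • DP s =
          -((Q - 1) * P * (Q - (s:ℂ) • (1 : Matrix (Fin 2) (Fin 2) ℂ)) * P)
          - P * (Q - (s:ℂ) • (1 : Matrix (Fin 2) (Fin 2) ℂ)) * P * Q
          - P * Q * (Q - 1) * P
          - ((θ0 + 1) • (P * (Q - 1) + Q * P)
              + (θ + 2 * θi1 - 1) • (P * (Q - (s:ℂ) • (1 : Matrix (Fin 2) (Fin 2) ℂ)) + Q * P)
              + θt • (P * (Q - (s:ℂ) • (1 : Matrix (Fin 2) (Fin 2) ℂ)) + (Q - 1) * P))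
          - ((θ + θi1) * (θ0 + θt + θi1)) • (1 : Matrix (Fin 2) (Fin 2) ℂ))
        (Qm (q1 s) (q2 s) (u s)) (Pm (p1 s) (p2 s) (q2 s) (θ + θi1 + θi2) (u s))) :
    -- the trace is independent of u
    (∀ t a b c d v w : ℂ, v ≠ 0 → w ≠ 0 →
      trVI θ0 θ1 θt θi1 θi2 θi3 t a b c d v = trVI θ0 θ1 θt θi1 θi2 θi3 t a b c d w) ∧
    -- the trace is a polynomial function of (q₁,p₁,q₂,p₂)
    (∀ t : ℂ, ∃ F : MvPolynomial (Fin 4) ℂ, ∀ a b c d v : ℂ, v ≠ 0 →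
      trVI θ0 θ1 θt θi1 θi2 θi3 t a b c d v = MvPolynomial.eval ![a, b, c, d] F) ∧
    -- Hamilton's equations
    (∀ s ∈ Set.Ioo α β,
      HasDerivAt q1
        (deriv (fun x => HVI θ0 θ1 θt θi1 θi2 θi3 (s:ℂ) (q1 s) x (q2 s) (p2 s)) (p1 s)) s ∧
      HasDerivAt p1
        (-(deriv (fun x => HVI θ0 θ1 θt θi1 θi2 θi3 (s:ℂ) x (p1 s) (q2 s) (p2 s)) (q1 s))) s ∧
      HasDerivAt q2
        (deriv (fun x => HVI θ0 θ1 θt θi1 θi2 θi3 (s:ℂ) (q1 s) (p1 s) (q2 s) x) (p2 s)) s ∧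
      HasDerivAt p2
        (-(deriv (fun x => HVI θ0 θ1 θt θi1 θi2 θi3 (s:ℂ) (q1 s) (p1 s) x (p2 s)) (q2 s))) s) := by
  refine ⟨?_, ?_, ?_⟩
  · intro t a b c d v w hv hw
    rw [trVI_eq θ0 θ1 θt θi1 θi2 θi3 t a b c d v hv,
      trVI_eq θ0 θ1 θt θi1 θi2 θi3 t a b c d w hw]
  · intro t
    refine ⟨MvPolynomial.C ((1)*θi2 + (-1)*θi2^2 + (1)*θi1 + (-2)*θi1*θi2 + (-1)*θi1^2 + (1)*θt + (-1)*θt*θi2 + (-1)*θt*θi1 + (1)*θ1 + (-2)*θ1*θi2 + (-2)*θ1*θi1 + (-1)*θ1*θt + (-1)*θ1^2 + (1)*θ0 + (-1)*θ0*θi2 + (-1)*θ0*θi1 + (-1)*θ0*θ1 + (-1)*t*θi2 + (-1)*t*θi1 + (2)*t*θi1*θi2 + (2)*t*θi1^2 + (-1)*t*θt + (2)*t*θt*θi2 + (4)*t*θt*θi1 + (2)*t*θt^2 + (-1)*t*θ1 + (1)*t*θ1*θi2 + (3)*t*θ1*θi1 + (3)*t*θ1*θt + (1)*t*θ1^2 +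 (-1)*t*θ0 + (1)*t*θ0*θi2 + (3)*t*θ0*θi1 + (3)*t*θ0*θt + (2)*t*θ0*θ1 + (1)*t*θ0^2)
        + MvPolynomial.C ((-2) + (1)*θi3 + (3)*θi2 + (4)*θi1 + (2)*θt + (4)*θ1 + (2)*θ0 + (2)*t + (2)*t*θi2 + (-2)*t*θi1 + (-2)*t*θt) * MvPolynomial.X 2 * MvPolynomial.X 3
        + MvPolynomial.C ((-2) + (-2)*t) * MvPolynomial.X 2 ^ 2 * MvPolynomial.X 3 ^ 2
        + MvPolynomial.C ((-1)*t*θi2 + (-1)*t*θi1 + (-1)*t*θ1 + (-1)*t*θ0) * MvPolynomial.X 1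
        + MvPolynomial.C (((1)/2)*θi3 + ((3)/2)*θi2 + (1)*θ1) * MvPolynomial.X 1 * MvPolynomial.X 2
        + MvPolynomial.C ((2)*t) * MvPolynomial.X 1 * MvPolynomial.X 2 * MvPolynomial.X 3
        + MvPolynomial.C ((-2)) * MvPolynomial.X 1 * MvPolynomial.X 2 ^ 2 * MvPolynomial.X 3
        + MvPolynomial.C (((1)/2) + ((1)/2)*t) * MvPolynomial.X 1 ^ 2 * MvPolynomial.X 2
        + MvPolynomial.C ((2)*θi2^2 + (2)*θ1*θi2) * MvPolynomial.X 0
        + MvPolynomial.C ((2)*t*θi2 + (2)*t*θi1 + (2)*t*θt + (2)*t*θ1 + (2)*t*θ0) * MvPolynomial.X 0 * MvPolynomial.X 3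
        + MvPolynomial.C ((-2)*θi3 + (-8)*θi2 + (-2)*θi1 + (-2)*θt + (-6)*θ1 + (-2)*θ0) * MvPolynomial.X 0 * MvPolynomial.X 2 * MvPolynomial.X 3
        + MvPolynomial.C ((-2)*t) * MvPolynomial.X 0 * MvPolynomial.X 2 * MvPolynomial.X 3 ^ 2
        + MvPolynomial.C ((6)) * MvPolynomial.X 0 * MvPolynomial.X 2 ^ 2 * MvPolynomial.X 3 ^ 2
        + MvPolynomial.C ((-1) + ((1)/2)*θi3 + ((5)/2)*θi2 + (3)*θi1 + (2)*θt + (3)*θ1 + (2)*θ0 + (1)*t + (2)*t*θi2 + (1)*t*θ1 + (1)*t*θ0) * MvPolynomial.X 0 * MvPolynomial.X 1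
        + MvPolynomial.C ((-4) + (-4)*t) * MvPolynomial.X 0 * MvPolynomial.X 1 * MvPolynomial.X 2 * MvPolynomial.X 3
        + MvPolynomial.C (((1)/2)*t) * MvPolynomial.X 0 * MvPolynomial.X 1 ^ 2
        + MvPolynomial.C (((-3)/2)) * MvPolynomial.X 0 * MvPolynomial.X 1 ^ 2 * MvPolynomial.X 2
        + MvPolynomial.C ((-2)*θi2 + (-2)*θi1 + (-2)*θt + (-2)*θ1 + (-2)*θ0 + (-2)*t*θi2 + (-2)*t*θi1 + (-2)*t*θt + (-2)*t*θ1 + (-2)*t*θ0) * MvPolynomial.X 0 ^ 2 * MvPolynomial.X 3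
        + MvPolynomial.C ((2) + (2)*t) * MvPolynomial.X 0 ^ 2 * MvPolynomial.X 2 * MvPolynomial.X 3 ^ 2
        + MvPolynomial.C (((-1)/2)*θi3 + ((-7)/2)*θi2 + (-2)*θi1 + (-2)*θt + (-3)*θ1 + (-2)*θ0) * MvPolynomial.X 0 ^ 2 * MvPolynomial.X 1
        + MvPolynomial.C ((6)) * MvPolynomial.X 0 ^ 2 * MvPolynomial.X 1 * MvPolynomial.X 2 * MvPolynomial.X 3
        + MvPolynomial.C (((-1)/2) + ((-1)/2)*t) * MvPolynomial.X 0 ^ 2 * MvPolynomial.X 1 ^ 2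
        + MvPolynomial.C ((2)*θi2 + (2)*θi1 + (2)*θt + (2)*θ1 + (2)*θ0) * MvPolynomial.X 0 ^ 3 * MvPolynomial.X 3
        + MvPolynomial.C ((-2)) * MvPolynomial.X 0 ^ 3 * MvPolynomial.X 2 * MvPolynomial.X 3 ^ 2
        + MvPolynomial.C (((1)/2)) * MvPolynomial.X 0 ^ 3 * MvPolynomial.X 1 ^ 2, ?_⟩
    intro a b c d v hv
    rw [trVI_eq θ0 θ1 θt θi1 θi2 θi3 t a b c d v hv]
    simp only [_root_.map_add, _root_.map_mul, _root_.map_pow, MvPolynomial.eval_C,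
      MvPolynomial.eval_X, Matrix.cons_val_zero, Matrix.cons_val_one, Matrix.head_cons,
      Matrix.cons_val', Matrix.empty_val', Matrix.cons_val_fin_one, Matrix.head_fin_const,
      Matrix.cons_val_two, Matrix.cons_val_three, Matrix.tail_cons]
    ring
  · intro s hs
    have hu0 : u s ≠ 0 := hu s hs
    have hvw : u s * (u s)⁻¹ = 1 := mul_inv_cancel₀ hu0
    have hs0 : (s:ℂ) ≠ 0 := by
      simp only [ne_eq, Complex.ofReal_eq_zero]
      intro h
      exact h0 (h ▸ hs)
    have hs1 : (s:ℂ) - 1 ≠ 0 := by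
      rw [sub_ne_zero]
      intro h
      have h' : s = (1:ℝ) := by exact_mod_cast h
      exact h1 (h' ▸ hs)
    have hS : (s:ℂ) * ((s:ℂ) - 1) ≠ 0 := mul_ne_zero hs0 hs1
    have hQ := heqQ s hs
    have hP := heqP s hs
    simp only at hQ hP
    rw [rhsQ_eq θ0 θ θt θi1 θi2 (s:ℂ) (q1 s) (p1 s) (q2 s) (p2 s) (u s) hu0,
      ← Matrix.ext_iff] at hQ
    rw [rhsP_eq θ0 θ θt θi1 θi2 (s:ℂ) (q1 s) (p1 s) (q2 s) (p2 s) (u s) hu0,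
      ← Matrix.ext_iff] at hP
    have h00 := hQ 0 0
    have h01 := hQ 0 1
    have h10 := hQ 1 0
    have k00 := hP 0 0
    have k01 := hP 0 1
    simp only [Matrix.smul_apply, smul_eq_mul, Matrix.cons_val', Matrix.cons_val_zero,
      Matrix.cons_val_one, Matrix.head_cons, Matrix.empty_val', Matrix.cons_val_fin_one,
      Matrix.head_fin_const, Matrix.of_apply] at h00 h01 h10 k00 k01
    have hd00 := hDQ s hs 0 0
    have hd01 := hDQ s hs 0 1
    have hd10 := hDQ s hs 1 0
    have kd00 := hDP s hs 0 0
    have kd01 := hDP s hs 0 1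
    simp only [Qm, Pm, Matrix.cons_val', Matrix.cons_val_zero, Matrix.cons_val_one,
      Matrix.head_cons, Matrix.empty_val', Matrix.cons_val_fin_one, Matrix.head_fin_const,
      Matrix.of_apply] at hd00 hd01 hd10 kd00 kd01
    refine ⟨?_, ?_, ?_, ?_⟩
    · rw [(hasDerivAt_HVI_b θ0 θ1 θt θi1 θi2 θi3 (s:ℂ) (q1 s) (q2 s) (p2 s) (p1 s)).deriv]
      have hval : DQ s 0 0 = ((s:ℂ)*((s:ℂ)-1))⁻¹ * ((((1)/2)*(q2 s)*θi3 + ((3)/2)*(q2 s)*θi2 + (1)*(q2 s)*θ1 + (-2)*(q2 s)^2*(p2 s) + (-1)*(q1 s) + ((1)/2)*(q1 s)*θi3 + ((5)/2)*(q1 s)*θi2 + (3)*(q1 s)*θi1 + (2)*(q1 s)*θt + (3)*(q1 s)*θ1 + (2)*(q1 s)*θ0 + (-4)*(q1 s)*(q2 s)*(p2 s) + ((-1)/2)*(q1 s)^2*θi3 + ((-7)/2)*(q1 s)^2*θi2 + (-2)*(q1 s)^2*θi1 + (-2)*(q1 s)^2*θt + (-3)*(q1 s)^2*θ1 + (-2)*(q1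 s)^2*θ0 + (6)*(q1 s)^2*(q2 s)*(p2 s) + (-1)*(s:ℂ)*θi2 + (-1)*(s:ℂ)*θi1 + (-1)*(s:ℂ)*θ1 + (-1)*(s:ℂ)*θ0 + (2)*(s:ℂ)*(q2 s)*(p2 s) + (1)*(s:ℂ)*(q1 s) + (2)*(s:ℂ)*(q1 s)*θi2 + (1)*(s:ℂ)*(q1 s)*θ1 + (1)*(s:ℂ)*(q1 s)*θ0 + (-4)*(s:ℂ)*(q1 s)*(q2 s)*(p2 s)) + 2 * (((1)/2)*(q2 s) + ((-3)/2)*(q1 s)*(q2 s) + ((-1)/2)*(q1 s)^2 + ((1)/2)*(q1 s)^3 + ((1)/2)*(s:ℂ)*(q2 s) + ((1)/2)*(s:ℂ)*(q1 s) + ((-1)/2)*(s:ℂ)*(q1 s)^2) * (p1 s) + 3 * (0) * (p1 s) ^ 2) := by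
        apply mul_left_cancel₀ hS
        rw [mul_inv_cancel_left₀ hS]
        linear_combination h00 + ((2)*(q1 s) + (-2)*(q1 s)^2 + (-1)*(s:ℂ) + (1)*(s:ℂ)*(q1 s)) * hθ + (((-1)/2)*(q2 s) + ((-1)/2)*(q1 s) + ((1)/2)*(q1 s)^2) * hFuchs + (0) * hvw
      rw [← hval]
      exact hd00
    · rw [(hasDerivAt_HVI_a θ0 θ1 θt θi1 θi2 θi3 (s:ℂ) (p1 s) (q2 s) (p2 s) (q1 s)).deriv]
      have hp1 : HasDerivAt p1 (2 * DP s 0 0) s := by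
        have h2 := kd00.const_mul (2:ℂ)
        refine h2.congr_of_eventuallyEq (Filter.Eventually.of_forall fun r => ?_)
        show p1 r = 2 * (p1 r / 2)
        ring
      have hval : 2 * DP s 0 0 = -(((s:ℂ)*((s:ℂ)-1))⁻¹ * (((2)*θi2^2 + (2)*θ1*θi2 + (-2)*(q2 s)*(p2 s)*θi3 + (-8)*(q2 s)*(p2 s)*θi2 + (-2)*(q2 s)*(p2 s)*θi1 + (-2)*(q2 s)*(p2 s)*θt + (-6)*(q2 s)*(p2 s)*θ1 + (-2)*(q2 s)*(p2 s)*θ0 + (6)*(q2 s)^2*(p2 s)^2 + (-1)*(p1 s) + ((1)/2)*(p1 s)*θi3 + ((5)/2)*(p1 s)*θi2 + (3)*(p1 s)*θi1 + (2)*(p1 s)*θt + (3)*(p1 s)*θ1 + (2)*(p1 s)*θ0 + (-4)*(p1 s)*(q2 s)*(p2 s) + ((-3)/2)*(p1 s)^2*(q2 s) + (2)*(s:ℂ)*(p2 s)*θi2 + (2)*(s:ℂ)*(p2 s)*θi1 + (2)*(s:ℂ)*(p2 s)*θt + (2)*(s:ℂ)*(p2 s)*θ1 + (2)*(s:ℂ)*(p2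 s)*θ0 + (-2)*(s:ℂ)*(q2 s)*(p2 s)^2 + (1)*(s:ℂ)*(p1 s) + (2)*(s:ℂ)*(p1 s)*θi2 + (1)*(s:ℂ)*(p1 s)*θ1 + (1)*(s:ℂ)*(p1 s)*θ0 + (-4)*(s:ℂ)*(p1 s)*(q2 s)*(p2 s) + ((1)/2)*(s:ℂ)*(p1 s)^2) + 2 * ((-2)*(p2 s)*θi2 + (-2)*(p2 s)*θi1 + (-2)*(p2 s)*θt + (-2)*(p2 s)*θ1 + (-2)*(p2 s)*θ0 + (2)*(q2 s)*(p2 s)^2 + ((-1)/2)*(p1 s)*θi3 + ((-7)/2)*(p1 s)*θi2 + (-2)*(p1 s)*θi1 + (-2)*(p1 s)*θt + (-3)*(p1 s)*θ1 + (-2)*(p1 s)*θ0 + (6)*(p1 s)*(q2 s)*(p2 s) + ((-1)/2)*(p1 s)^2 + (-2)*(s:ℂ)*(p2 s)*θi2 + (-2)*(s:ℂ)*(p2 s)*θi1 + (-2)*(s:ℂ)*(p2 s)*θt + (-2)*(s:ℂ)*(p2 s)*θ1 + (-2)*(s:ℂ)*(p2 s)*θ0 + (2)*(s:ℂ)*(q2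 s)*(p2 s)^2 + ((-1)/2)*(s:ℂ)*(p1 s)^2) * (q1 s) + 3 * ((2)*(p2 s)*θi2 + (2)*(p2 s)*θi1 + (2)*(p2 s)*θt + (2)*(p2 s)*θ1 + (2)*(p2 s)*θ0 + (-2)*(q2 s)*(p2 s)^2 + ((1)/2)*(p1 s)^2) * (q1 s) ^ 2)) := by
        apply mul_left_cancel₀ hS
        rw [mul_neg, mul_inv_cancel_left₀ hS]
        linear_combination 2 * k00 + ((-2)*θi2 + (2)*(q2 s)*(p2 s) + (-2)*(p1 s) + (4)*(q1 s)*(p2 s) + (4)*(q1 s)*(p1 s) + (-6)*(q1 s)^2*(p2 s) + (-2)*(s:ℂ)*(p2 s) + (-1)*(s:ℂ)*(p1 s) + (4)*(s:ℂ)*(q1 s)*(p2 s)) * hθ + ((-2)*(q2 s)*(p2 s) + ((1)/2)*(p1 s) + (-1)*(q1 s)*(p1 s)) * hFuchs + (0) * hvw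
      rw [← hval]
      exact hp1
    · rw [(hasDerivAt_HVI_d θ0 θ1 θt θi1 θi2 θi3 (s:ℂ) (q1 s) (p1 s) (q2 s) (p2 s)).deriv]
      have hq2 : HasDerivAt q2 (-(DQ s 1 0 * u s + -q2 s / u s * DQ s 0 1)) s := by
        have hmul := hd10.mul hd01
        refine hmul.neg.congr_of_eventuallyEq ?_
        filter_upwards [Ioo_mem_nhds hs.1 hs.2] with r hr
        show q2 r = -(-q2 r / u r * u r)
        rw [div_mul_cancel₀ _ (hu r hr), neg_neg]
      have hval : -(DQ s 1 0 * u s + -q2 s / u s * DQ s 0 1)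
          = ((s:ℂ)*((s:ℂ)-1))⁻¹ * (((-2)*(q2 s) + (1)*(q2 s)*θi3 + (3)*(q2 s)*θi2 + (4)*(q2 s)*θi1 + (2)*(q2 s)*θt + (4)*(q2 s)*θ1 + (2)*(q2 s)*θ0 + (-2)*(p1 s)*(q2 s)^2 + (-2)*(q1 s)*(q2 s)*θi3 + (-8)*(q1 s)*(q2 s)*θi2 + (-2)*(q1 s)*(q2 s)*θi1 + (-2)*(q1 s)*(q2 s)*θt + (-6)*(q1 s)*(q2 s)*θ1 + (-2)*(q1 s)*(q2 s)*θ0 + (-4)*(q1 s)*(p1 s)*(q2 s) + (-2)*(q1 s)^2*θi2 + (-2)*(q1 s)^2*θi1 + (-2)*(q1 s)^2*θt + (-2)*(q1 s)^2*θ1 + (-2)*(q1 s)^2*θ0 + (6)*(q1 s)^2*(p1 s)*(q2 s) + (2)*(q1 s)^3*θi2 + (2)*(q1 s)^3*θi1 + (2)*(q1 s)^3*θt + (2)*(q1 s)^3*θ1 + (2)*(q1 s)^3*θ0 + (2)*(s:ℂ)*(q2 s) + (2)*(s:ℂ)*(q2 s)*θi2 + (-2)*(s:ℂ)*(q2 s)*θi1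 + (-2)*(s:ℂ)*(q2 s)*θt + (2)*(s:ℂ)*(p1 s)*(q2 s) + (2)*(s:ℂ)*(q1 s)*θi2 + (2)*(s:ℂ)*(q1 s)*θi1 + (2)*(s:ℂ)*(q1 s)*θt + (2)*(s:ℂ)*(q1 s)*θ1 + (2)*(s:ℂ)*(q1 s)*θ0 + (-4)*(s:ℂ)*(q1 s)*(p1 s)*(q2 s) + (-2)*(s:ℂ)*(q1 s)^2*θi2 + (-2)*(s:ℂ)*(q1 s)^2*θi1 + (-2)*(s:ℂ)*(q1 s)^2*θt + (-2)*(s:ℂ)*(q1 s)^2*θ1 + (-2)*(s:ℂ)*(q1 s)^2*θ0) + 2 * ((-2)*(q2 s)^2 + (6)*(q1 s)*(q2 s)^2 + (2)*(q1 s)^2*(q2 s) + (-2)*(q1 s)^3*(q2 s) + (-2)*(s:ℂ)*(q2 s)^2 + (-2)*(s:ℂ)*(q1 s)*(q2 s) + (2)*(s:ℂ)*(q1 s)^2*(q2 s)) * (p2 s) + 3 * (0) * (p2 s) ^ 2) := by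
        apply mul_left_cancel₀ hS
        rw [mul_inv_cancel_left₀ hS]
        linear_combination (-(u s)) * h10 + (q2 s * (u s)⁻¹) * h01
          + ((2)*(q2 s)*(u s)*(u s)⁻¹ + (-2)*(q1 s)*(q2 s)*(u s)*(u s)⁻¹ + (-2)*(q1 s)^2*(u s)*(u s)⁻¹ + (2)*(q1 s)^3*(u s)*(u s)⁻¹ + (2)*(s:ℂ)*(q1 s)*(u s)*(u s)⁻¹ + (-2)*(s:ℂ)*(q1 s)^2*(u s)*(u s)⁻¹) * hθ + ((-1)*(q2 s) + (2)*(q1 s)*(q2 s)) * hFuchs + ((-2)*(q2 s) + (2)*(q2 s)*θi2 + (2)*(q2 s)*θi1 + (2)*(q2 s)*θ1 + (-4)*(q2 s)^2*(p2 s) + (-2)*(p1 s)*(q2 s)^2 + (-6)*(q1 s)*(q2 s)*θi2 + (2)*(q1 s)*(q2 s)*θi1 + (2)*(q1 s)*(q2 s)*θt + (-2)*(q1 s)*(q2 s)*θ1 + (2)*(q1 s)*(q2 s)*θ0 + (12)*(q1 s)*(q2 s)^2*(p2 s) + (-4)*(q1 s)*(p1 s)*(q2 s) + (-2)*(q1 s)^2*θi2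 + (-2)*(q1 s)^2*θi1 + (-2)*(q1 s)^2*θt + (-2)*(q1 s)^2*θ1 + (-2)*(q1 s)^2*θ0 + (4)*(q1 s)^2*(q2 s)*(p2 s) + (6)*(q1 s)^2*(p1 s)*(q2 s) + (2)*(q1 s)^3*θi2 + (2)*(q1 s)^3*θi1 + (2)*(q1 s)^3*θt + (2)*(q1 s)^3*θ1 + (2)*(q1 s)^3*θ0 + (-4)*(q1 s)^3*(q2 s)*(p2 s) + (2)*(s:ℂ)*(q2 s) + (2)*(s:ℂ)*(q2 s)*θi2 + (-2)*(s:ℂ)*(q2 s)*θi1 + (-2)*(s:ℂ)*(q2 s)*θt + (-4)*(s:ℂ)*(q2 s)^2*(p2 s) + (2)*(s:ℂ)*(p1 s)*(q2 s) + (2)*(s:ℂ)*(q1 s)*θi2 + (2)*(s:ℂ)*(q1 s)*θi1 + (2)*(s:ℂ)*(q1 s)*θt + (2)*(s:ℂ)*(q1 s)*θ1 + (2)*(s:ℂ)*(q1 s)*θ0 + (-4)*(s:ℂ)*(q1 s)*(q2 s)*(p2 s) + (-4)*(s:ℂ)*(q1 s)*(p1 s)*(q2 s) + (-2)*(s:ℂ)*(q1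 s)^2*θi2 + (-2)*(s:ℂ)*(q1 s)^2*θi1 + (-2)*(s:ℂ)*(q1 s)^2*θt + (-2)*(s:ℂ)*(q1 s)^2*θ1 + (-2)*(s:ℂ)*(q1 s)^2*θ0 + (4)*(s:ℂ)*(q1 s)^2*(q2 s)*(p2 s)) * hvw
      rw [← hval]
      exact hq2
    · rw [(hasDerivAt_HVI_c θ0 θ1 θt θi1 θi2 θi3 (s:ℂ) (q1 s) (p1 s) (p2 s) (q2 s)).deriv]
      have hp2 : HasDerivAt p2 (-((DP s 0 1 * u s - -p2 s * u s * DQ s 0 1) / u s ^ 2)) s := by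
        have hdiv := kd01.div hd01 hu0
        refine hdiv.neg.congr_of_eventuallyEq ?_
        filter_upwards [Ioo_mem_nhds hs.1 hs.2] with r hr
        show p2 r = -(-p2 r * u r / u r)
        rw [mul_div_cancel_right₀ _ (hu r hr), neg_neg]
      have hval : -((DP s 0 1 * u s - -p2 s * u s * DQ s 0 1) / u s ^ 2)
          = -(((s:ℂ)*((s:ℂ)-1))⁻¹ * (((-2)*(p2 s) + (1)*(p2 s)*θi3 + (3)*(p2 s)*θi2 + (4)*(p2 s)*θi1 + (2)*(p2 s)*θt + (4)*(p2 s)*θ1 + (2)*(p2 s)*θ0 + ((1)/2)*(p1 s)*θi3 + ((3)/2)*(p1 s)*θi2 + (1)*(p1 s)*θ1 + ((1)/2)*(p1 s)^2 + (-2)*(q1 s)*(p2 s)*θi3 + (-8)*(q1 s)*(p2 s)*θi2 + (-2)*(q1 s)*(p2 s)*θi1 + (-2)*(q1 s)*(p2 s)*θt + (-6)*(q1 s)*(p2 s)*θ1 + (-2)*(q1 s)*(p2 s)*θ0 + (-4)*(q1 s)*(p1 s)*(p2 s) + ((-3)/2)*(q1 s)*(p1 s)^2 + (2)*(q1 s)^2*(p2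 s)^2 + (6)*(q1 s)^2*(p1 s)*(p2 s) + (-2)*(q1 s)^3*(p2 s)^2 + (2)*(s:ℂ)*(p2 s) + (2)*(s:ℂ)*(p2 s)*θi2 + (-2)*(s:ℂ)*(p2 s)*θi1 + (-2)*(s:ℂ)*(p2 s)*θt + (2)*(s:ℂ)*(p1 s)*(p2 s) + ((1)/2)*(s:ℂ)*(p1 s)^2 + (-2)*(s:ℂ)*(q1 s)*(p2 s)^2 + (-4)*(s:ℂ)*(q1 s)*(p1 s)*(p2 s) + (2)*(s:ℂ)*(q1 s)^2*(p2 s)^2) + 2 * ((-2)*(p2 s)^2 + (-2)*(p1 s)*(p2 s) + (6)*(q1 s)*(p2 s)^2 + (-2)*(s:ℂ)*(p2 s)^2) * (q2 s) + 3 * (0) * (q2 s) ^ 2)) := by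
        apply mul_left_cancel₀ hS
        rw [mul_neg, mul_neg, mul_inv_cancel_left₀ hS]
        linear_combination (-(u s) * (u s)⁻¹^2) * k01 + (-(p2 s) * (u s) * (u s)⁻¹^2) * h01
          + ((-2)*(p2 s)*(u s)^2*(u s)⁻¹^2 + (2)*(q1 s)*(p2 s)*(u s)^2*(u s)⁻¹^2) * hθ + ((1)*(p2 s) + ((1)/2)*(p1 s) + (-2)*(q1 s)*(p2 s)) * hFuchs + ((2)*(p2 s) + (-2)*(p2 s)*θi2 + (-2)*(p2 s)*θi1 + (-2)*(p2 s)*θ1 + (2)*(p2 s)*(u s)*(u s)⁻¹ + (-2)*(p2 s)*(u s)*(u s)⁻¹*θi2 + (-2)*(p2 s)*(u s)*(u s)⁻¹*θi1 + (-2)*(p2 s)*(u s)*(u s)⁻¹*θ1 + (4)*(q2 s)*(p2 s)^2 + (4)*(q2 s)*(p2 s)^2*(u s)*(u s)⁻¹ + (-1)*(p1 s)*θi2 + (1)*(p1 s)*θi1 + (1)*(p1 s)*θt + (1)*(p1 s)*θ0 + (-1)*(p1 s)*(u s)*(u s)⁻¹*θi2 + (1)*(p1 s)*(u s)*(u s)⁻¹*θi1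 + (1)*(p1 s)*(u s)*(u s)⁻¹*θt + (1)*(p1 s)*(u s)*(u s)⁻¹*θ0 + (4)*(p1 s)*(q2 s)*(p2 s) + (4)*(p1 s)*(q2 s)*(p2 s)*(u s)*(u s)⁻¹ + ((-1)/2)*(p1 s)^2 + ((-1)/2)*(p1 s)^2*(u s)*(u s)⁻¹ + (6)*(q1 s)*(p2 s)*θi2 + (-2)*(q1 s)*(p2 s)*θi1 + (-2)*(q1 s)*(p2 s)*θt + (2)*(q1 s)*(p2 s)*θ1 + (-2)*(q1 s)*(p2 s)*θ0 + (6)*(q1 s)*(p2 s)*(u s)*(u s)⁻¹*θi2 + (-2)*(q1 s)*(p2 s)*(u s)*(u s)⁻¹*θi1 + (-2)*(q1 s)*(p2 s)*(u s)*(u s)⁻¹*θt + (2)*(q1 s)*(p2 s)*(u s)*(u s)⁻¹*θ1 + (-2)*(q1 s)*(p2 s)*(u s)*(u s)⁻¹*θ0 + (-12)*(q1 s)*(q2 s)*(p2 s)^2 + (-12)*(q1 s)*(q2 s)*(p2 s)^2*(u s)*(u s)⁻¹ + (4)*(q1 s)*(p1 s)*(p2 s) + (4)*(q1 s)*(p1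 s)*(p2 s)*(u s)*(u s)⁻¹ + ((3)/2)*(q1 s)*(p1 s)^2 + ((3)/2)*(q1 s)*(p1 s)^2*(u s)*(u s)⁻¹ + (-2)*(q1 s)^2*(p2 s)^2 + (-2)*(q1 s)^2*(p2 s)^2*(u s)*(u s)⁻¹ + (-6)*(q1 s)^2*(p1 s)*(p2 s) + (-6)*(q1 s)^2*(p1 s)*(p2 s)*(u s)*(u s)⁻¹ + (2)*(q1 s)^3*(p2 s)^2 + (2)*(q1 s)^3*(p2 s)^2*(u s)*(u s)⁻¹ + (-2)*(s:ℂ)*(p2 s) + (-2)*(s:ℂ)*(p2 s)*θi2 + (2)*(s:ℂ)*(p2 s)*θi1 + (2)*(s:ℂ)*(p2 s)*θt + (-2)*(s:ℂ)*(p2 s)*(u s)*(u s)⁻¹ + (-2)*(s:ℂ)*(p2 s)*(u s)*(u s)⁻¹*θi2 + (2)*(s:ℂ)*(p2 s)*(u s)*(u s)⁻¹*θi1 + (2)*(s:ℂ)*(p2 s)*(u s)*(u s)⁻¹*θt + (4)*(s:ℂ)*(q2 s)*(p2 s)^2 + (4)*(s:ℂ)*(q2 s)*(p2 s)^2*(u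 s)*(u s)⁻¹ + (-2)*(s:ℂ)*(p1 s)*(p2 s) + (-2)*(s:ℂ)*(p1 s)*(p2 s)*(u s)*(u s)⁻¹ + ((-1)/2)*(s:ℂ)*(p1 s)^2 + ((-1)/2)*(s:ℂ)*(p1 s)^2*(u s)*(u s)⁻¹ + (2)*(s:ℂ)*(q1 s)*(p2 s)^2 + (2)*(s:ℂ)*(q1 s)*(p2 s)^2*(u s)*(u s)⁻¹ + (4)*(s:ℂ)*(q1 s)*(p1 s)*(p2 s) + (4)*(s:ℂ)*(q1 s)*(p1 s)*(p2 s)*(u s)*(u s)⁻¹ + (-2)*(s:ℂ)*(q1 s)^2*(p2 s)^2 + (-2)*(s:ℂ)*(q1 s)^2*(p2 s)^2*(u s)*(u s)⁻¹) * hvw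
      rw [← hval]
      exact hp2
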